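/- arXiv:2307.14573 — 2 statements merged into one kernel-verified Lean document; each statement's English description precedes it below -/
import Mathlib

section
/- Let A be a unital associative ℂ-algebra, X an n×n symmetric matrix over A whose entries pairwise commute, Y an n×m matrix over A, and H an n×m matrix over A such that [X_{ij}, Y_{kl}] = −(δ_{ik} H_{jl} + δ_{jk} H_{il}) for all 1 ≤ i,j,k ≤ n, 1 ≤ l ≤ m, and every entry of X commutes with every entry of H (automatic when n ≥ 4). Then for every r, A_r · (X_1Y_1 + (r−1)H_1)(X_2Y_2 + (r−2)H_2) ⋯ (X_{r−1}Y_{r−1} + H_{r−1})(X_rY_r) = A_r · X_1⋯X_r Y_1⋯Y_r as A-linear operators (ℂ^m)^{⊗r} → (ℂ^n)^{⊗r}. -/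
/-!
STATEMENT 4: generalized Turnbull identity (operator form) for symmetric matrices:
A_r · (X₁Y₁ + (r−1)H₁)(X₂Y₂ + (r−2)H₂) ⋯ (X_rY_r) = A_r · X₁⋯X_r Y₁⋯Y_r
as A-linear operators (ℂ^m)^{⊗r} → (ℂ^n)^{⊗r}.
-/

namespace Stmt4

open Matrix

/-- The permutation operator `P^σ` on `(ℂ^n)^{⊗ r}`, as a matrix over `A`. -/
def Pmat (A : Type*) [Ring A] {n r : ℕ} (σ : Equiv.Perm (Fin r)) :
    Matrix (Fin r → Fin n) (Fin r → Fin n) A :=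
  Matrix.of fun I J => if I ∘ σ = J then 1 else 0

/-- The normalized antisymmetrizer `A_r = (1/r!) Σ_σ sgn(σ) P^σ`. -/
noncomputable def Amat (A : Type*) [Ring A] [Algebra ℂ A] (n r : ℕ) :
    Matrix (Fin r → Fin n) (Fin r → Fin n) A :=
  ((r.factorial : ℂ))⁻¹ • ∑ σ : Equiv.Perm (Fin r), (Equiv.Perm.sign σ : ℤ) • Pmat A σ

/-- The operator `(Z 1)_1 (Z 2)_2 ⋯ (Z r)_r`, where `(Z k)_k` is the `n × s` matrix
`Z k` acting on the k-th tensor factor; its `(I,K)`-entry is the ordered product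
`(Z 1)_{i₁k₁} (Z 2)_{i₂k₂} ⋯ (Z r)_{i_r k_r}`. -/
def chain {A : Type*} [Ring A] {n s r : ℕ} (Z : Fin r → Matrix (Fin n) (Fin s) A) :
    Matrix (Fin r → Fin n) (Fin r → Fin s) A :=
  Matrix.of fun I K => ((List.finRange r).map (fun t => Z t (I t) (K t))).prod

/-! ### Auxiliary machinery -/

section Aux

variable {A : Type*} [Ring A] [Algebra ℂ A] {n m r : ℕ}

/-- ordered product of `g a, g (a+1), ..., g (a+b-1)` -/
def Pr (g : ℕ → A) (a b : ℕ) : A := ((List.range' a b).map g).prod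

omit [Algebra ℂ A] in
@[simp] lemma Pr_zero (g : ℕ → A) (a : ℕ) : Pr g a 0 = 1 := rfl

omit [Algebra ℂ A] in
lemma Pr_succ_left (g : ℕ → A) (a b : ℕ) : Pr g a (b+1) = g a * Pr g (a+1) b := by
  simp [Pr, List.range'_succ]

omit [Algebra ℂ A] in
lemma Pr_concat (g : ℕ → A) (a b : ℕ) : Pr g a (b+1) = Pr g a b * g (a + b) := by
  simp [Pr, List.range'_concat]

omit [Algebra ℂ A] in
lemma Pr_congr {g g' : ℕ → A} {a b : ℕ} (h : ∀ t, a ≤ t → t < a + b → g t = g' t) :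
    Pr g a b = Pr g' a b := by
  unfold Pr
  congr 1
  apply List.map_congr_left
  intro t ht
  rw [List.mem_range'_1] at ht
  exact h t ht.1 ht.2

omit [Algebra ℂ A] in
lemma Commute.pr {c : A} {g : ℕ → A} {a b : ℕ}
    (h : ∀ t, a ≤ t → t < a + b → Commute c (g t)) : Commute c (Pr g a b) := by
  apply Commute.list_prod_right
  intro x hx
  rw [List.mem_map] at hx
  obtain ⟨t, ht, rfl⟩ := hx
  rw [List.mem_range'_1] at ht
  exact h t ht.1 ht.2

omit [Algebra ℂ A] in
lemma prod_finRange_eq_Pr (f : Fin r → A) (g : ℕ → A) (h : ∀ t : Fin r, g t = f t) :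
    ((List.finRange r).map f).prod = Pr g 0 r := by
  unfold Pr
  rw [← List.range_eq_range', ← (show (List.finRange r).map (fun i : Fin r => (i : ℕ)) = List.range r from
    List.ext_getElem (by simp) (by simp)), List.map_map]
  congr 1
  apply List.map_congr_left
  intro t _
  exact (h t).symm

omit [Algebra ℂ A] in
/-- collapse of the sum over one coordinate -/
lemma sum_coord_collapse {p : Fin r} {F G : (Fin r → Fin n) → A}
    (h : ∀ J : Fin r → Fin n, ∑ v : Fin n, F (Function.update J p v)
        = ∑ v : Fin n, G (Function.update J p v)) :
    ∑ J : Fin r → Fin n, F J = ∑ J : Fin r → Fin n, G J := by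
  rcases Nat.eq_zero_or_pos n with hn | hn
  · subst hn
    have : IsEmpty (Fin r → Fin 0) := ⟨fun J => (J p).elim0⟩
    simp
  · set e := Equiv.funSplitAt p (Fin n) with he
    rw [← e.symm.sum_comp F, ← e.symm.sum_comp G, Fintype.sum_prod_type]
    rw [Fintype.sum_prod_type (f := fun x => G (e.symm x))]
    rw [Finset.sum_comm, show (∑ x : Fin n, ∑ y : { j // j ≠ p } → Fin n, G (e.symm (x, y)))
        = ∑ y : { j // j ≠ p } → Fin n, ∑ x : Fin n, G (e.symm (x, y)) from Finset.sum_comm]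
    apply Finset.sum_congr rfl
    intro J' _
    have key : ∀ v : Fin n, e.symm (v, J') = Function.update (e.symm (⟨0, hn⟩, J')) p v := by
      intro v
      funext j
      by_cases hj : j = p
      · subst hj
        simp [he, Equiv.funSplitAt_symm_apply]
      · simp [he, Equiv.funSplitAt_symm_apply, hj, Function.update_of_ne hj]
    rw [Finset.sum_congr rfl (fun v _ => congrArg F (key v)),
        Finset.sum_congr rfl (fun v _ => congrArg G (key v))]
    exact h _

lemma sum_sign_smul_comp {τ : Equiv.Perm (Fin r)} (hτ : Equiv.Perm.sign τ = -1)
    (T U : Equiv.Perm (Fin r) → A) (h : ∀ σ, T σ = U (σ * τ)) :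
    ∑ σ : Equiv.Perm (Fin r), (Equiv.Perm.sign σ : ℤ) • T σ
      = - ∑ σ : Equiv.Perm (Fin r), (Equiv.Perm.sign σ : ℤ) • U σ := by
  have e : ∑ σ : Equiv.Perm (Fin r), (Equiv.Perm.sign σ : ℤ) • U σ
      = ∑ σ : Equiv.Perm (Fin r), (Equiv.Perm.sign (σ * τ) : ℤ) • U (σ * τ) :=
    (Equiv.sum_comp (Equiv.mulRight τ) (fun σ => (Equiv.Perm.sign σ : ℤ) • U σ)).symm
  rw [e, ← Finset.sum_neg_distrib]
  apply Finset.sum_congr rfl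
  intro σ _
  have hs : (Equiv.Perm.sign (σ * τ) : ℤ) = - (Equiv.Perm.sign σ : ℤ) := by
    rw [Equiv.Perm.sign_mul, hτ]
    simp
  rw [h σ, hs, neg_smul, neg_neg]

lemma sum_sign_smul_self_zero {τ : Equiv.Perm (Fin r)} (hτ : Equiv.Perm.sign τ = -1)
    (T : Equiv.Perm (Fin r) → A) (h : ∀ σ, T σ = T (σ * τ)) :
    ∑ σ : Equiv.Perm (Fin r), (Equiv.Perm.sign σ : ℤ) • T σ = 0 := by
  have h2 := sum_sign_smul_comp hτ T T h
  have h3 : (2 : ℂ) • (∑ σ : Equiv.Perm (Fin r), (Equiv.Perm.sign σ : ℤ) • T σ) = 0 := by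
    rw [show ((2:ℂ)) = ((2:ℕ):ℂ) by norm_num, Nat.cast_smul_eq_nsmul, two_nsmul]
    nth_rewrite 1 [h2]
    exact neg_add_cancel _
  calc ∑ σ : Equiv.Perm (Fin r), (Equiv.Perm.sign σ : ℤ) • T σ
      = ((2:ℂ)⁻¹ * 2) • (∑ σ : Equiv.Perm (Fin r), (Equiv.Perm.sign σ : ℤ) • T σ) := by norm_num
  _ = (2:ℂ)⁻¹ • ((2:ℂ) • (∑ σ : Equiv.Perm (Fin r), (Equiv.Perm.sign σ : ℤ) • T σ)) := by
      rw [mul_smul]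
  _ = 0 := by rw [h3, smul_zero]

lemma Amat_mul_apply {s : ℕ} (M : Matrix (Fin r → Fin n) (Fin r → Fin s) A)
    (I : Fin r → Fin n) (K : Fin r → Fin s) :
    (Amat A n r * M) I K
      = ((r.factorial : ℂ))⁻¹ • ∑ σ : Equiv.Perm (Fin r), (Equiv.Perm.sign σ : ℤ) • M (I ∘ σ) K := by
  rw [Amat, Matrix.smul_mul, Matrix.smul_apply]
  congr 1
  rw [Matrix.sum_mul, Matrix.sum_apply]
  apply Finset.sum_congr rfl
  intro σ _
  rw [Matrix.smul_mul, Matrix.smul_apply]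
  congr 1
  rw [Matrix.mul_apply]
  simp only [Pmat, Matrix.of_apply, ite_mul, one_mul, zero_mul]
  simp


variable (X : Matrix (Fin n) (Fin n) A) (Y H : Matrix (Fin n) (Fin m) A)

def xe (I J : Fin r → Fin n) (t : ℕ) : A :=
  if h : t < r then X (I ⟨t, h⟩) (J ⟨t, h⟩) else 1

def ye (J : Fin r → Fin n) (K : Fin r → Fin m) (t : ℕ) : A :=
  if h : t < r then Y (J ⟨t, h⟩) (K ⟨t, h⟩) else 1

def fde (I J : Fin r → Fin n) (K : Fin r → Fin m) (t : ℕ) : A :=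
  if h : t < r then
    (if J ⟨t, h⟩ = I ⟨t, h⟩ then (X * Y + (r - 1 - t) • H) (I ⟨t, h⟩) (K ⟨t, h⟩) else 0)
  else 1

def stage (p : ℕ) (I : Fin r → Fin n) (K : Fin r → Fin m) : A :=
  ∑ J : Fin r → Fin n,
    Pr (fde X Y H I J K) 0 p * Pr (xe X I J) p (r - p) * Pr (ye Y J K) p (r - p)

omit [Algebra ℂ A] in
lemma xe_val (I J : Fin r → Fin n) (t : Fin r) : xe X I J (t : ℕ) = X (I t) (J t) := by
  simp [xe, t.isLt]

omit [Algebra ℂ A] in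
lemma ye_val (J : Fin r → Fin n) (K : Fin r → Fin m) (t : Fin r) :
    ye Y J K (t : ℕ) = Y (J t) (K t) := by
  simp [ye, t.isLt]

omit [Algebra ℂ A] in
lemma stage_zero (I : Fin r → Fin n) (K : Fin r → Fin m) :
    stage X Y H 0 I K = (chain (fun _ : Fin r => X) * chain (fun _ : Fin r => Y)) I K := by
  rw [Matrix.mul_apply]
  unfold stage
  apply Finset.sum_congr rfl
  intro J _
  rw [Pr_zero, one_mul, Nat.sub_zero]
  show Pr (xe X I J) 0 r * Pr (ye Y J K) 0 r = chain _ I J * chain _ J K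
  rw [chain, chain, Matrix.of_apply, Matrix.of_apply,
    prod_finRange_eq_Pr (fun t => X (I t) (J t)) (xe X I J) (fun t => xe_val X I J t),
    prod_finRange_eq_Pr (fun t => Y (J t) (K t)) (ye Y J K) (fun t => ye_val Y J K t)]

omit [Algebra ℂ A] in
lemma stage_last (I : Fin r → Fin n) (K : Fin r → Fin m) :
    stage X Y H r I K = chain (fun k : Fin r => X * Y + (r - 1 - (k : ℕ)) • H) I K := by
  unfold stage
  rw [chain, Matrix.of_apply, Finset.sum_eq_single I]
  · rw [Nat.sub_self, Pr_zero, Pr_zero, mul_one, mul_one,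
      prod_finRange_eq_Pr (fun t : Fin r => (X * Y + ((r:ℕ) - 1 - (t:ℕ)) • H) (I t) (K t))
        (fde X Y H I I K) (fun t => by simp [fde, t.isLt])]
  · intro J _ hJ
    obtain ⟨t, ht⟩ := Function.ne_iff.mp hJ
    have h0 : Pr (fde X Y H I J K) 0 r = 0 := by
      apply List.prod_eq_zero
      rw [List.mem_map]
      exact ⟨(t : ℕ), by simp [List.mem_range'_1, t.isLt], by simp [fde, t.isLt, ht]⟩
    rw [h0, zero_mul, zero_mul]
  · intro hI
    exact absurd (Finset.mem_univ I) hI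


omit [Algebra ℂ A] in
lemma Pr_append (g : ℕ → A) (a b c : ℕ) : Pr g a (b + c) = Pr g a b * Pr g (a + b) c := by
  unfold Pr
  rw [Nat.add_comm b c, ← List.prod_append, ← List.map_append, List.range'_append_1,
    Nat.add_comm c b]

omit [Algebra ℂ A] in
lemma middle_reorder {x h u v : A} (hxu : Commute x u) (hhu : Commute h u) (hxh : x * h = h * x) :
    x * u * h * v = h * (u * (x * v)) := by
  calc x * u * h * v = x * (u * h) * v := by rw [mul_assoc x]
  _ = x * (h * u) * v := by rw [hhu.eq]
  _ = x * h * u * v := by rw [← mul_assoc x]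
  _ = h * x * u * v := by rw [hxh]
  _ = h * (x * u) * v := by rw [mul_assoc h]
  _ = h * (u * x) * v := by rw [hxu.eq]
  _ = h * (u * (x * v)) := by rw [mul_assoc h, mul_assoc u]

lemma step_lemma0 : True := trivial

omit [Algebra ℂ A] in
lemma xe_update (I J : Fin r → Fin n) (P : Fin r) (v : Fin n) {t : ℕ} (ht : t ≠ (P : ℕ)) :
    xe X I (Function.update J P v) t = xe X I J t := by
  unfold xe
  split
  · next h =>
      rw [Function.update_of_ne (fun he => ht (by rw [← he]))]
  · rfl

omit [Algebra ℂ A] in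
lemma ye_update (J : Fin r → Fin n) (K : Fin r → Fin m) (P : Fin r) (v : Fin n) {t : ℕ}
    (ht : t ≠ (P : ℕ)) :
    ye Y (Function.update J P v) K t = ye Y J K t := by
  unfold ye
  split
  · next h =>
      rw [Function.update_of_ne (fun he => ht (by rw [← he]))]
  · rfl

omit [Algebra ℂ A] in
lemma fde_update (I J : Fin r → Fin n) (K : Fin r → Fin m) (P : Fin r) (v : Fin n) {t : ℕ}
    (ht : t ≠ (P : ℕ)) :
    fde X Y H I (Function.update J P v) K t = fde X Y H I J K t := by
  unfold fde
  split
  · next h =>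
      rw [Function.update_of_ne (fun he => ht (by rw [← he]))]
  · rfl

omit [Algebra ℂ A] in
lemma xe_comp_swap (I : Fin r → Fin n) (J : Fin r → Fin n) (σ : Equiv.Perm (Fin r))
    (P Q : Fin r) {t : ℕ} (htp : t ≠ (P : ℕ)) (htq : t ≠ (Q : ℕ)) :
    xe X (I ∘ (σ * Equiv.swap P Q)) J t = xe X (I ∘ σ) J t := by
  unfold xe
  split
  · next h =>
      have : (σ * Equiv.swap P Q) ⟨t, h⟩ = σ ⟨t, h⟩ := by
        have h1 : (⟨t, h⟩ : Fin r) ≠ P := fun he => htp (by rw [← he])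
        have h2 : (⟨t, h⟩ : Fin r) ≠ Q := fun he => htq (by rw [← he])
        simp [Equiv.Perm.mul_apply, Equiv.swap_apply_of_ne_of_ne h1 h2]
      rw [show (I ∘ (σ * Equiv.swap P Q)) ⟨t, h⟩ = I ((σ * Equiv.swap P Q) ⟨t, h⟩) from rfl,
        this]
      rfl
  · rfl

omit [Algebra ℂ A] in
lemma fde_comp_swap (I J : Fin r → Fin n) (K : Fin r → Fin m) (σ : Equiv.Perm (Fin r))
    (P Q : Fin r) {t : ℕ} (htp : t ≠ (P : ℕ)) (htq : t ≠ (Q : ℕ)) :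
    fde X Y H (I ∘ (σ * Equiv.swap P Q)) J K t = fde X Y H (I ∘ σ) J K t := by
  unfold fde
  split
  · next h =>
      have h1 : (⟨t, h⟩ : Fin r) ≠ P := fun he => htp (by rw [← he])
      have h2 : (⟨t, h⟩ : Fin r) ≠ Q := fun he => htq (by rw [← he])
      have : (σ * Equiv.swap P Q) ⟨t, h⟩ = σ ⟨t, h⟩ := by
        simp [Equiv.Perm.mul_apply, Equiv.swap_apply_of_ne_of_ne h1 h2]
      rw [show (I ∘ (σ * Equiv.swap P Q)) ⟨t, h⟩ = I ((σ * Equiv.swap P Q) ⟨t, h⟩) from rfl, this]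
      rfl
  · rfl

omit [Algebra ℂ A] in
lemma comp_swap_left (I : Fin r → Fin n) (σ : Equiv.Perm (Fin r)) (P Q : Fin r) :
    (I ∘ (σ * Equiv.swap P Q)) P = (I ∘ σ) Q := by
  simp [Equiv.Perm.mul_apply]

omit [Algebra ℂ A] in
lemma comp_swap_right (I : Fin r → Fin n) (σ : Equiv.Perm (Fin r)) (P Q : Fin r) :
    (I ∘ (σ * Equiv.swap P Q)) Q = (I ∘ σ) P := by
  simp [Equiv.Perm.mul_apply]

lemma stepQ
    (hXsymm : ∀ i j, X i j = X j i)
    (p q d : ℕ) (hpq : p < q) (hq : q < r)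
    (I : Fin r → Fin n) (K : Fin r → Fin m) :
    ∑ σ : Equiv.Perm (Fin r), (Equiv.Perm.sign σ : ℤ) •
      ∑ J : Fin r → Fin n,
        Pr (fde X Y H (I ∘ σ) J K) 0 p *
          (X ((I ∘ σ) ⟨p, hpq.trans hq⟩) (J ⟨p, hpq.trans hq⟩) *
            Pr (xe X (I ∘ σ) J) (p+1) (q-(p+1)) *
            (if (I ∘ σ) ⟨q, hq⟩ = J ⟨p, hpq.trans hq⟩ then
              H (J ⟨q, hq⟩) (K ⟨p, hpq.trans hq⟩) else 0) *
            Pr (xe X (I ∘ σ) J) (q+1) d) *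
          Pr (ye Y J K) (p+1) (r-(p+1)) = 0 := by
  have hp : p < r := hpq.trans hq
  set P : Fin r := ⟨p, hp⟩ with hPdef
  set Qf : Fin r := ⟨q, hq⟩ with hQdef
  have hPQ : P ≠ Qf := by
    simp only [hPdef, hQdef, ne_eq, Fin.mk.injEq]
    omega
  apply sum_sign_smul_self_zero (Equiv.Perm.sign_swap hPQ)
  intro σ
  apply sum_coord_collapse (p := P)
  intro J
  have key : ∀ σ' : Equiv.Perm (Fin r),
      (∑ v : Fin n,
        Pr (fde X Y H (I ∘ σ') (Function.update J P v) K) 0 p *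
          (X ((I ∘ σ') P) ((Function.update J P v) P) *
            Pr (xe X (I ∘ σ') (Function.update J P v)) (p+1) (q-(p+1)) *
            (if (I ∘ σ') Qf = (Function.update J P v) P then
              H ((Function.update J P v) Qf) (K P) else 0) *
            Pr (xe X (I ∘ σ') (Function.update J P v)) (q+1) d) *
          Pr (ye Y (Function.update J P v) K) (p+1) (r-(p+1)))
      = Pr (fde X Y H (I ∘ σ') J K) 0 p *
          (X ((I ∘ σ') P) ((I ∘ σ') Qf) *
            Pr (xe X (I ∘ σ') J) (p+1) (q-(p+1)) *
            H (J Qf) (K P) *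
            Pr (xe X (I ∘ σ') J) (q+1) d) *
          Pr (ye Y J K) (p+1) (r-(p+1)) := by
    intro σ'
    have E1 : ∀ v, Pr (fde X Y H (I ∘ σ') (Function.update J P v) K) 0 p
        = Pr (fde X Y H (I ∘ σ') J K) 0 p :=
      fun v => Pr_congr fun t h1 h2 => fde_update X Y H _ _ _ _ _ (show t ≠ p by omega)
    have E2 : ∀ v, Pr (xe X (I ∘ σ') (Function.update J P v)) (p+1) (q-(p+1))
        = Pr (xe X (I ∘ σ') J) (p+1) (q-(p+1)) :=
      fun v => Pr_congr fun t h1 h2 => xe_update X _ _ _ _ (show t ≠ p by omega)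
    have E3 : ∀ v, Pr (xe X (I ∘ σ') (Function.update J P v)) (q+1) d
        = Pr (xe X (I ∘ σ') J) (q+1) d :=
      fun v => Pr_congr fun t h1 h2 => xe_update X _ _ _ _ (show t ≠ p by omega)
    have E4 : ∀ v, Pr (ye Y (Function.update J P v) K) (p+1) (r-(p+1))
        = Pr (ye Y J K) (p+1) (r-(p+1)) :=
      fun v => Pr_congr fun t h1 h2 => ye_update Y _ _ _ _ (show t ≠ p by omega)
    simp only [E1, E2, E3, E4, Function.update_self,
      Function.update_of_ne (Ne.symm hPQ), mul_ite, ite_mul, mul_zero, zero_mul,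
      Finset.sum_ite_eq, Finset.mem_univ, if_true]
  rw [key σ, key (σ * Equiv.swap P Qf)]
  have F1 : Pr (fde X Y H (I ∘ (σ * Equiv.swap P Qf)) J K) 0 p
      = Pr (fde X Y H (I ∘ σ) J K) 0 p :=
    Pr_congr fun t h1 h2 =>
      fde_comp_swap X Y H _ _ _ _ _ _ (show t ≠ p by omega) (show t ≠ q by omega)
  have F2 : Pr (xe X (I ∘ (σ * Equiv.swap P Qf)) J) (p+1) (q-(p+1))
      = Pr (xe X (I ∘ σ) J) (p+1) (q-(p+1)) :=
    Pr_congr fun t h1 h2 =>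
      xe_comp_swap X _ _ _ _ _ (show t ≠ p by omega) (show t ≠ q by omega)
  have F3 : Pr (xe X (I ∘ (σ * Equiv.swap P Qf)) J) (q+1) d
      = Pr (xe X (I ∘ σ) J) (q+1) d :=
    Pr_congr fun t h1 h2 =>
      xe_comp_swap X _ _ _ _ _ (show t ≠ p by omega) (show t ≠ q by omega)
  rw [F1, F2, F3, comp_swap_left, comp_swap_right, hXsymm ((I ∘ σ) Qf) ((I ∘ σ) P)]

lemma stepR
    (hXcomm : ∀ i j k l, Commute (X i j) (X k l))
    (hXH : ∀ i j k l, Commute (X i j) (H k l))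
    (p q d : ℕ) (hpq : p < q) (hq : q < r) (hd : q + 1 + d = r)
    (I : Fin r → Fin n) (K : Fin r → Fin m) :
    ∑ σ : Equiv.Perm (Fin r), (Equiv.Perm.sign σ : ℤ) •
      ∑ J : Fin r → Fin n,
        Pr (fde X Y H (I ∘ σ) J K) 0 p *
          (X ((I ∘ σ) ⟨p, hpq.trans hq⟩) (J ⟨p, hpq.trans hq⟩) *
            Pr (xe X (I ∘ σ) J) (p+1) (q-(p+1)) *
            (if J ⟨q, hq⟩ = J ⟨p, hpq.trans hq⟩ then
              H ((I ∘ σ) ⟨q, hq⟩) (K ⟨p, hpq.trans hq⟩) else 0) *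
            Pr (xe X (I ∘ σ) J) (q+1) d) *
          Pr (ye Y J K) (p+1) (r-(p+1))
    = - ∑ σ : Equiv.Perm (Fin r), (Equiv.Perm.sign σ : ℤ) •
      ∑ J : Fin r → Fin n,
        Pr (fde X Y H (I ∘ σ) J K) 0 p *
          ((if J ⟨p, hpq.trans hq⟩ = (I ∘ σ) ⟨p, hpq.trans hq⟩ then
              H ((I ∘ σ) ⟨p, hpq.trans hq⟩) (K ⟨p, hpq.trans hq⟩) else 0) *
            Pr (xe X (I ∘ σ) J) (p+1) (r-(p+1))) *
          Pr (ye Y J K) (p+1) (r-(p+1)) := by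
  have hp : p < r := hpq.trans hq
  set P : Fin r := ⟨p, hp⟩ with hPdef
  set Qf : Fin r := ⟨q, hq⟩ with hQdef
  have hPQ : P ≠ Qf := by
    simp only [hPdef, hQdef, ne_eq, Fin.mk.injEq]
    omega
  apply sum_sign_smul_comp (Equiv.Perm.sign_swap hPQ)
  intro σ
  apply sum_coord_collapse (p := P)
  intro J
  have E1 : ∀ v, Pr (fde X Y H (I ∘ σ) (Function.update J P v) K) 0 p
      = Pr (fde X Y H (I ∘ σ) J K) 0 p :=
    fun v => Pr_congr fun t h1 h2 => fde_update X Y H _ _ _ _ _ (show t ≠ p by omega)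
  have E2 : ∀ v, Pr (xe X (I ∘ σ) (Function.update J P v)) (p+1) (q-(p+1))
      = Pr (xe X (I ∘ σ) J) (p+1) (q-(p+1)) :=
    fun v => Pr_congr fun t h1 h2 => xe_update X _ _ _ _ (show t ≠ p by omega)
  have E3 : ∀ v, Pr (xe X (I ∘ σ) (Function.update J P v)) (q+1) d
      = Pr (xe X (I ∘ σ) J) (q+1) d :=
    fun v => Pr_congr fun t h1 h2 => xe_update X _ _ _ _ (show t ≠ p by omega)
  have E4 : ∀ v, Pr (ye Y (Function.update J P v) K) (p+1) (r-(p+1))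
      = Pr (ye Y J K) (p+1) (r-(p+1)) :=
    fun v => Pr_congr fun t h1 h2 => ye_update Y _ _ _ _ (show t ≠ p by omega)
  have E1' : ∀ v, Pr (fde X Y H (I ∘ (σ * Equiv.swap P Qf)) (Function.update J P v) K) 0 p
      = Pr (fde X Y H (I ∘ σ) J K) 0 p :=
    fun v => Pr_congr fun t h1 h2 =>
      (fde_update X Y H _ _ _ _ _ (show t ≠ p by omega)).trans
        (fde_comp_swap X Y H _ _ _ _ _ _ (show t ≠ p by omega) (show t ≠ q by omega))
  have E5' : ∀ v, Pr (xe X (I ∘ (σ * Equiv.swap P Qf)) (Function.update J P v)) (p+1) (r-(p+1))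
      = Pr (xe X (I ∘ (σ * Equiv.swap P Qf)) J) (p+1) (r-(p+1)) :=
    fun v => Pr_congr fun t h1 h2 => xe_update X _ _ _ _ (show t ≠ p by omega)
  simp only [E1, E2, E3, E4, E1', E5', Function.update_self,
    Function.update_of_ne (Ne.symm hPQ), comp_swap_left, mul_ite, ite_mul, mul_zero, zero_mul,
    Finset.sum_ite_eq, Finset.sum_ite_eq', Finset.mem_univ, if_true]
  -- now split the full product on the RHS at position q
  have hsplit : Pr (xe X (I ∘ (σ * Equiv.swap P Qf)) J) (p+1) (r-(p+1))
      = Pr (xe X (I ∘ σ) J) (p+1) (q-(p+1)) *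
        (X ((I ∘ σ) P) (J Qf) * Pr (xe X (I ∘ σ) J) (q+1) d) := by
    rw [show r - (p+1) = (q-(p+1)) + (d + 1) by omega, Pr_append,
      show p + 1 + (q - (p+1)) = q by omega, Pr_succ_left]
    congr 1
    · exact Pr_congr fun t h1 h2 =>
        xe_comp_swap X _ _ _ _ _ (show t ≠ p by omega) (show t ≠ q by omega)
    congr 1
    · rw [show q = (Qf : ℕ) from rfl, xe_val, comp_swap_right]
    · exact Pr_congr fun t h1 h2 =>
        xe_comp_swap X _ _ _ _ _ (show t ≠ p by omega) (show t ≠ q by omega)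
  rw [hsplit]
  have hxu : Commute (X ((I ∘ σ) P) (J Qf)) (Pr (xe X (I ∘ σ) J) (p+1) (q-(p+1))) :=
    Commute.pr fun t _ _ => by
      unfold xe
      split
      · exact hXcomm _ _ _ _
      · exact Commute.one_right _
  have hhu : Commute (H ((I ∘ σ) Qf) (K P)) (Pr (xe X (I ∘ σ) J) (p+1) (q-(p+1))) :=
    Commute.pr fun t _ _ => by
      unfold xe
      split
      · exact (hXH _ _ _ _).symm
      · exact Commute.one_right _
  have hxh : X ((I ∘ σ) P) (J Qf) * H ((I ∘ σ) Qf) (K P)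
      = H ((I ∘ σ) Qf) (K P) * X ((I ∘ σ) P) (J Qf) := (hXH _ _ _ _).eq
  rw [middle_reorder hxu hhu hxh]

omit [Algebra ℂ A] in
lemma xy_rw
    (hXY : ∀ i j k l, X i j * Y k l - Y k l * X i j
        = -((if i = k then H j l else 0) + (if j = k then H i l else 0)))
    (i j k : Fin n) (l : Fin m) :
    X i j * Y k l = Y k l * X i j
      - (if i = k then H j l else 0) - (if j = k then H i l else 0) := by
  have h := hXY i j k l
  have h2 : X i j * Y k l = Y k l * X i j + (X i j * Y k l - Y k l * X i j) := by
    abel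
  rw [h2, h]
  abel

omit [Algebra ℂ A] in
lemma stage_p_eq (p : ℕ) (hp : p < r) (I' : Fin r → Fin n) (K : Fin r → Fin m) :
    stage X Y H p I' K
      = ∑ J : Fin r → Fin n,
        Pr (fde X Y H I' J K) 0 p *
          (X (I' ⟨p, hp⟩) (J ⟨p, hp⟩) * Pr (xe X I' J) (p+1) (r-(p+1)) *
            Y (J ⟨p, hp⟩) (K ⟨p, hp⟩)) *
          Pr (ye Y J K) (p+1) (r-(p+1)) := by
  unfold stage
  apply Finset.sum_congr rfl
  intro J _
  have hx : xe X I' J p = X (I' ⟨p, hp⟩) (J ⟨p, hp⟩) := by unfold xe; rw [dif_pos hp]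
  have hy : ye Y J K p = Y (J ⟨p, hp⟩) (K ⟨p, hp⟩) := by unfold ye; rw [dif_pos hp]
  rw [show r - p = (r-(p+1))+1 by omega, Pr_succ_left, Pr_succ_left, hx, hy]
  simp only [mul_assoc]

lemma stage_succ_eq (p : ℕ) (hp : p < r) (I' : Fin r → Fin n) (K : Fin r → Fin m) :
    stage X Y H (p+1) I' K
      = ∑ J : Fin r → Fin n,
        Pr (fde X Y H I' J K) 0 p *
          (X (I' ⟨p, hp⟩) (J ⟨p, hp⟩) * Pr (xe X I' J) (p+1) (r-(p+1)-(r-(p+1))) *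
              Y (J ⟨p, hp⟩) (K ⟨p, hp⟩) * Pr (xe X I' J) (r-(r-(p+1))) (r-(p+1))
            + (r-(p+1)) • ((if J ⟨p, hp⟩ = I' ⟨p, hp⟩ then H (I' ⟨p, hp⟩) (K ⟨p, hp⟩) else 0) *
                Pr (xe X I' J) (p+1) (r-(p+1)))) *
          Pr (ye Y J K) (p+1) (r-(p+1)) := by
  set P : Fin r := ⟨p, hp⟩ with hPdef
  unfold stage
  apply sum_coord_collapse (p := P)
  intro J
  have E1 : ∀ v, Pr (fde X Y H I' (Function.update J P v) K) 0 p
      = Pr (fde X Y H I' J K) 0 p :=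
    fun v => Pr_congr fun t h1 h2 => fde_update X Y H _ _ _ _ _ (show t ≠ p by omega)
  have E2 : ∀ v, Pr (xe X I' (Function.update J P v)) (p+1) (r-(p+1))
      = Pr (xe X I' J) (p+1) (r-(p+1)) :=
    fun v => Pr_congr fun t h1 h2 => xe_update X _ _ _ _ (show t ≠ p by omega)
  have E4 : ∀ v, Pr (ye Y (Function.update J P v) K) (p+1) (r-(p+1))
      = Pr (ye Y J K) (p+1) (r-(p+1)) :=
    fun v => Pr_congr fun t h1 h2 => ye_update Y _ _ _ _ (show t ≠ p by omega)
  have hfde : ∀ v, fde X Y H I' (Function.update J P v) K p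
      = if v = I' P then
          ((X * Y) (I' P) (K P) + (r-(p+1)) • H (I' P) (K P)) else 0 := by
    intro v
    unfold fde
    rw [dif_pos hp, show (⟨p, hp⟩ : Fin r) = P from rfl, Function.update_self,
      show r - 1 - p = r - (p+1) by omega, Matrix.add_apply, Matrix.smul_apply]
  have harith1 : r - (p+1) - (r - (p+1)) = 0 := by omega
  have harith2 : r - (r-(p+1)) = p + 1 := by omega
  rw [show p + 1 = p + 1 from rfl]
  calc ∑ v : Fin n,
        Pr (fde X Y H I' (Function.update J P v) K) 0 (p+1) *
          Pr (xe X I' (Function.update J P v)) (p+1) (r-(p+1)) *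
          Pr (ye Y (Function.update J P v) K) (p+1) (r-(p+1))
      = ∑ v : Fin n,
        (if v = I' P then
          Pr (fde X Y H I' J K) 0 p *
            (((X * Y) (I' P) (K P) + (r-(p+1)) • H (I' P) (K P)) *
              Pr (xe X I' J) (p+1) (r-(p+1))) *
            Pr (ye Y J K) (p+1) (r-(p+1)) else 0) := by
        apply Finset.sum_congr rfl
        intro v _
        rw [Pr_concat, Nat.zero_add, E1, E2, E4, hfde]
        simp only [mul_ite, ite_mul, mul_zero, zero_mul, mul_assoc]
  _ = Pr (fde X Y H I' J K) 0 p *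
        (((X * Y) (I' P) (K P) + (r-(p+1)) • H (I' P) (K P)) *
          Pr (xe X I' J) (p+1) (r-(p+1))) *
        Pr (ye Y J K) (p+1) (r-(p+1)) := by
        simp only [Finset.sum_ite_eq', Finset.mem_univ, if_true]
  _ = ∑ v : Fin n,
        Pr (fde X Y H I' (Function.update J P v) K) 0 p *
          (X (I' P) ((Function.update J P v) P) *
              Pr (xe X I' (Function.update J P v)) (p+1) (r-(p+1)-(r-(p+1))) *
              Y ((Function.update J P v) P) (K P) *
              Pr (xe X I' (Function.update J P v)) (r-(r-(p+1))) (r-(p+1))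
            + (r-(p+1)) • ((if (Function.update J P v) P = I' P then H (I' P) (K P) else 0) *
                Pr (xe X I' (Function.update J P v)) (p+1) (r-(p+1)))) *
          Pr (ye Y (Function.update J P v) K) (p+1) (r-(p+1)) := by
        have E2' : ∀ v, Pr (xe X I' (Function.update J P v)) (r-(r-(p+1))) (r-(p+1))
            = Pr (xe X I' J) (p+1) (r-(p+1)) := by
          intro v
          rw [harith2]
          exact Pr_congr fun t h1 h2 => xe_update X _ _ _ _ (show t ≠ p by omega)
        simp only [E1, E2, E2', E4, harith1, Pr_zero, mul_one, Function.update_self]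
        simp only [mul_add, add_mul, Finset.sum_add_distrib]
        congr 1
        · simp only [Matrix.mul_apply, Finset.sum_mul, Finset.mul_sum]
        · simp only [mul_ite, ite_mul, mul_zero, zero_mul, smul_ite, smul_zero,
            mul_smul_comm, smul_mul_assoc]
          simp only [Finset.sum_ite_eq', Finset.mem_univ, if_true]

lemma step_lemma
    (hXsymm : ∀ i j, X i j = X j i)
    (hXcomm : ∀ i j k l, Commute (X i j) (X k l))
    (hXY : ∀ i j k l, X i j * Y k l - Y k l * X i j
        = -((if i = k then H j l else 0) + (if j = k then H i l else 0)))
    (hXH : ∀ i j k l, Commute (X i j) (H k l))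
    (p : ℕ) (hp : p < r) (I : Fin r → Fin n) (K : Fin r → Fin m) :
    ∑ σ : Equiv.Perm (Fin r), (Equiv.Perm.sign σ : ℤ) • stage X Y H (p+1) (I ∘ σ) K
      = ∑ σ : Equiv.Perm (Fin r), (Equiv.Perm.sign σ : ℤ) • stage X Y H p (I ∘ σ) K := by
  set P : Fin r := ⟨p, hp⟩ with hPdef
  have hmain : ∀ d, d ≤ r - (p+1) →
      (∑ σ : Equiv.Perm (Fin r), (Equiv.Perm.sign σ : ℤ) •
        ∑ J : Fin r → Fin n,
          Pr (fde X Y H (I ∘ σ) J K) 0 p *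
            (X ((I ∘ σ) P) (J P) * Pr (xe X (I ∘ σ) J) (p+1) (r-(p+1)) * Y (J P) (K P)) *
            Pr (ye Y J K) (p+1) (r-(p+1)))
      = ∑ σ : Equiv.Perm (Fin r), (Equiv.Perm.sign σ : ℤ) •
        ∑ J : Fin r → Fin n,
          Pr (fde X Y H (I ∘ σ) J K) 0 p *
            (X ((I ∘ σ) P) (J P) * Pr (xe X (I ∘ σ) J) (p+1) (r-(p+1)-d) * Y (J P) (K P) *
                Pr (xe X (I ∘ σ) J) (r-d) d
              + d • ((if J P = (I ∘ σ) P then H ((I ∘ σ) P) (K P) else 0) *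
                  Pr (xe X (I ∘ σ) J) (p+1) (r-(p+1)))) *
            Pr (ye Y J K) (p+1) (r-(p+1)) := by
    intro d hd
    induction d with
    | zero => simp
    | succ d ih =>
      rw [ih (by omega)]
      have hpq : p < r - 1 - d := by omega
      have hq : r - 1 - d < r := by omega
      set q := r - 1 - d with hqdef
      set Qf : Fin r := ⟨q, hq⟩ with hQdef
      have peralg : ∀ (σ : Equiv.Perm (Fin r)) (J : Fin r → Fin n),
          Pr (fde X Y H (I ∘ σ) J K) 0 p *
            (X ((I ∘ σ) P) (J P) * Pr (xe X (I ∘ σ) J) (p+1) (r-(p+1)-d) * Y (J P) (K P) *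
                Pr (xe X (I ∘ σ) J) (r-d) d
              + d • ((if J P = (I ∘ σ) P then H ((I ∘ σ) P) (K P) else 0) *
                  Pr (xe X (I ∘ σ) J) (p+1) (r-(p+1)))) *
            Pr (ye Y J K) (p+1) (r-(p+1))
          = (Pr (fde X Y H (I ∘ σ) J K) 0 p *
              (X ((I ∘ σ) P) (J P) * Pr (xe X (I ∘ σ) J) (p+1) (r-(p+1)-(d+1)) * Y (J P) (K P) *
                  Pr (xe X (I ∘ σ) J) (r-(d+1)) (d+1)
                + (d+1) • ((if J P = (I ∘ σ) P then H ((I ∘ σ) P) (K P) else 0) *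
                    Pr (xe X (I ∘ σ) J) (p+1) (r-(p+1)))) *
              Pr (ye Y J K) (p+1) (r-(p+1)))
            - (Pr (fde X Y H (I ∘ σ) J K) 0 p *
                ((if J P = (I ∘ σ) P then H ((I ∘ σ) P) (K P) else 0) *
                  Pr (xe X (I ∘ σ) J) (p+1) (r-(p+1))) *
                Pr (ye Y J K) (p+1) (r-(p+1)))
            - (Pr (fde X Y H (I ∘ σ) J K) 0 p *
                (X ((I ∘ σ) P) (J P) * Pr (xe X (I ∘ σ) J) (p+1) (q-(p+1)) *
                  (if (I ∘ σ) Qf = J P then H (J Qf) (K P) else 0) *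
                  Pr (xe X (I ∘ σ) J) (q+1) d) *
                Pr (ye Y J K) (p+1) (r-(p+1)))
            - (Pr (fde X Y H (I ∘ σ) J K) 0 p *
                (X ((I ∘ σ) P) (J P) * Pr (xe X (I ∘ σ) J) (p+1) (q-(p+1)) *
                  (if J Qf = J P then H ((I ∘ σ) Qf) (K P) else 0) *
                  Pr (xe X (I ∘ σ) J) (q+1) d) *
                Pr (ye Y J K) (p+1) (r-(p+1))) := by
        intro σ J
        have h1 : Pr (xe X (I ∘ σ) J) (p+1) (r-(p+1)-d)
            = Pr (xe X (I ∘ σ) J) (p+1) (q-(p+1)) * X ((I ∘ σ) Qf) (J Qf) := by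
          rw [show r-(p+1)-d = (q-(p+1)) + 1 by omega, Pr_concat,
            show p+1+(q-(p+1)) = q by omega]
          congr 1
          unfold xe
          rw [dif_pos hq]
        have h2 : Pr (xe X (I ∘ σ) J) (r-(d+1)) (d+1)
            = X ((I ∘ σ) Qf) (J Qf) * Pr (xe X (I ∘ σ) J) (q+1) d := by
          rw [show r-(d+1) = q by omega, Pr_succ_left]
          congr 1
          unfold xe
          rw [dif_pos hq]
        have h3 : Pr (xe X (I ∘ σ) J) (r-d) d = Pr (xe X (I ∘ σ) J) (q+1) d := by
          rw [show r-d = q+1 by omega]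
        have h4 : r-(p+1)-(d+1) = q-(p+1) := by omega
        rw [h1, h2, h3, h4]
        have h6 : ∀ z : A, X ((I ∘ σ) Qf) (J Qf) * (Y (J P) (K P) * z)
            = Y (J P) (K P) * (X ((I ∘ σ) Qf) (J Qf) * z)
              - (if (I ∘ σ) Qf = J P then H (J Qf) (K P) else 0) * z
              - (if J Qf = J P then H ((I ∘ σ) Qf) (K P) else 0) * z := by
          intro z
          have e0 : X ((I ∘ σ) Qf) (J Qf) * (Y (J P) (K P) * z)
              = (X ((I ∘ σ) Qf) (J Qf) * Y (J P) (K P)) * z := (mul_assoc _ _ _).symm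
          rw [e0, xy_rw X Y H hXY, sub_mul, sub_mul, mul_assoc]
        simp only [mul_assoc, succ_nsmul, mul_add, add_mul, mul_sub, sub_mul,
          smul_mul_assoc, mul_smul_comm]
        rw [h6]
        simp only [mul_assoc, mul_add, add_mul, mul_sub, sub_mul, smul_mul_assoc,
          mul_smul_comm]
        abel
      calc ∑ σ : Equiv.Perm (Fin r), (Equiv.Perm.sign σ : ℤ) •
            ∑ J : Fin r → Fin n,
              Pr (fde X Y H (I ∘ σ) J K) 0 p *
                (X ((I ∘ σ) P) (J P) * Pr (xe X (I ∘ σ) J) (p+1) (r-(p+1)-d) * Y (J P) (K P) *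
                    Pr (xe X (I ∘ σ) J) (r-d) d
                  + d • ((if J P = (I ∘ σ) P then H ((I ∘ σ) P) (K P) else 0) *
                      Pr (xe X (I ∘ σ) J) (p+1) (r-(p+1)))) *
                Pr (ye Y J K) (p+1) (r-(p+1))
          = ∑ σ : Equiv.Perm (Fin r), (Equiv.Perm.sign σ : ℤ) •
            ∑ J : Fin r → Fin n,
              ((Pr (fde X Y H (I ∘ σ) J K) 0 p *
                (X ((I ∘ σ) P) (J P) * Pr (xe X (I ∘ σ) J) (p+1) (r-(p+1)-(d+1)) * Y (J P) (K P) *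
                    Pr (xe X (I ∘ σ) J) (r-(d+1)) (d+1)
                  + (d+1) • ((if J P = (I ∘ σ) P then H ((I ∘ σ) P) (K P) else 0) *
                      Pr (xe X (I ∘ σ) J) (p+1) (r-(p+1)))) *
                Pr (ye Y J K) (p+1) (r-(p+1)))
              - (Pr (fde X Y H (I ∘ σ) J K) 0 p *
                  ((if J P = (I ∘ σ) P then H ((I ∘ σ) P) (K P) else 0) *
                    Pr (xe X (I ∘ σ) J) (p+1) (r-(p+1))) *
                  Pr (ye Y J K) (p+1) (r-(p+1)))
              - (Pr (fde X Y H (I ∘ σ) J K) 0 p *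
                  (X ((I ∘ σ) P) (J P) * Pr (xe X (I ∘ σ) J) (p+1) (q-(p+1)) *
                    (if (I ∘ σ) Qf = J P then H (J Qf) (K P) else 0) *
                    Pr (xe X (I ∘ σ) J) (q+1) d) *
                  Pr (ye Y J K) (p+1) (r-(p+1)))
              - (Pr (fde X Y H (I ∘ σ) J K) 0 p *
                  (X ((I ∘ σ) P) (J P) * Pr (xe X (I ∘ σ) J) (p+1) (q-(p+1)) *
                    (if J Qf = J P then H ((I ∘ σ) Qf) (K P) else 0) *
                    Pr (xe X (I ∘ σ) J) (q+1) d) *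
                  Pr (ye Y J K) (p+1) (r-(p+1)))) :=
            Finset.sum_congr rfl fun σ _ => by
              rw [Finset.sum_congr rfl fun J _ => peralg σ J]
      _ = ∑ σ : Equiv.Perm (Fin r), (Equiv.Perm.sign σ : ℤ) •
            ∑ J : Fin r → Fin n,
              Pr (fde X Y H (I ∘ σ) J K) 0 p *
                (X ((I ∘ σ) P) (J P) * Pr (xe X (I ∘ σ) J) (p+1) (r-(p+1)-(d+1)) * Y (J P) (K P) *
                    Pr (xe X (I ∘ σ) J) (r-(d+1)) (d+1)
                  + (d+1) • ((if J P = (I ∘ σ) P then H ((I ∘ σ) P) (K P) else 0) *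
                      Pr (xe X (I ∘ σ) J) (p+1) (r-(p+1)))) *
                Pr (ye Y J K) (p+1) (r-(p+1)) := by
            simp only [Finset.sum_sub_distrib, smul_sub]
            rw [stepQ X Y H hXsymm p q d hpq hq I K,
              stepR X Y H hXcomm hXH p q d hpq hq (by omega) I K]
            abel
  calc ∑ σ : Equiv.Perm (Fin r), (Equiv.Perm.sign σ : ℤ) • stage X Y H (p+1) (I ∘ σ) K
      = ∑ σ : Equiv.Perm (Fin r), (Equiv.Perm.sign σ : ℤ) •
        ∑ J : Fin r → Fin n,
          Pr (fde X Y H (I ∘ σ) J K) 0 p *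
            (X ((I ∘ σ) P) (J P) * Pr (xe X (I ∘ σ) J) (p+1) (r-(p+1)-(r-(p+1))) * Y (J P) (K P) *
                Pr (xe X (I ∘ σ) J) (r-(r-(p+1))) (r-(p+1))
              + (r-(p+1)) • ((if J P = (I ∘ σ) P then H ((I ∘ σ) P) (K P) else 0) *
                  Pr (xe X (I ∘ σ) J) (p+1) (r-(p+1)))) *
            Pr (ye Y J K) (p+1) (r-(p+1)) :=
        Finset.sum_congr rfl fun σ _ => by rw [stage_succ_eq X Y H p hp (I ∘ σ) K]
  _ = ∑ σ : Equiv.Perm (Fin r), (Equiv.Perm.sign σ : ℤ) •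
        ∑ J : Fin r → Fin n,
          Pr (fde X Y H (I ∘ σ) J K) 0 p *
            (X ((I ∘ σ) P) (J P) * Pr (xe X (I ∘ σ) J) (p+1) (r-(p+1)) * Y (J P) (K P)) *
            Pr (ye Y J K) (p+1) (r-(p+1)) := (hmain (r-(p+1)) le_rfl).symm
  _ = ∑ σ : Equiv.Perm (Fin r), (Equiv.Perm.sign σ : ℤ) • stage X Y H p (I ∘ σ) K :=
        Finset.sum_congr rfl fun σ _ => by rw [stage_p_eq X Y H p hp (I ∘ σ) K]

end Aux

theorem turnbull_symmetric_operator
    {A : Type*} [Ring A] [Algebra ℂ A] (n m r : ℕ)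
    (X : Matrix (Fin n) (Fin n) A) (Y H : Matrix (Fin n) (Fin m) A)
    (hXsymm : ∀ i j, X i j = X j i)
    (hXcomm : ∀ i j k l, Commute (X i j) (X k l))
    (hXY : ∀ i j k l, X i j * Y k l - Y k l * X i j
        = -((if i = k then H j l else 0) + (if j = k then H i l else 0)))
    (hXH : ∀ i j k l, Commute (X i j) (H k l)) :
    Amat A n r * chain (fun k : Fin r => X * Y + (r - 1 - (k : ℕ)) • H)
      = Amat A n r * (chain (fun _ : Fin r => X) * chain (fun _ : Fin r => Y)) := by
  ext I K
  rw [Amat_mul_apply, Amat_mul_apply]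
  congr 1
  have e1 : ∀ p, p ≤ r →
      (∑ σ : Equiv.Perm (Fin r), (Equiv.Perm.sign σ : ℤ) • stage X Y H p (I ∘ σ) K)
        = ∑ σ : Equiv.Perm (Fin r), (Equiv.Perm.sign σ : ℤ) • stage X Y H 0 (I ∘ σ) K := by
    intro p hp
    induction p with
    | zero => rfl
    | succ p ih =>
        rw [step_lemma X Y H hXsymm hXcomm hXY hXH p (by omega) I K]
        exact ih (by omega)
  calc ∑ σ : Equiv.Perm (Fin r), (Equiv.Perm.sign σ : ℤ)
        • chain (fun k : Fin r => X * Y + (r - 1 - (k : ℕ)) • H) (I ∘ σ) K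
      = ∑ σ : Equiv.Perm (Fin r), (Equiv.Perm.sign σ : ℤ) • stage X Y H r (I ∘ σ) K := by
        exact Finset.sum_congr rfl fun σ _ => by rw [stage_last]
  _ = ∑ σ : Equiv.Perm (Fin r), (Equiv.Perm.sign σ : ℤ) • stage X Y H 0 (I ∘ σ) K := e1 r le_rfl
  _ = ∑ σ : Equiv.Perm (Fin r), (Equiv.Perm.sign σ : ℤ)
        • (chain (fun _ : Fin r => X) * chain (fun _ : Fin r => Y)) ((I ∘ σ)) K := by
        exact Finset.sum_congr rfl fun σ _ => by rw [stage_zero]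

end Stmt4
end

section
/- Let A be a unital associative ℂ-algebra, X an n×n antisymmetric matrix over A whose entries pairwise commute, Y an n×m matrix over A, and H an n×m matrix over A such that [X_{ij}, Y_{kl}] = −(δ_{ik} H_{jl} − δ_{jk} H_{il}) for all 1 ≤ i,j,k ≤ n, 1 ≤ l ≤ m, and every entry of X commutes with every entry of H (automatic when n ≥ 4). Then for every r, S_r · (X_1Y_1 + (r−1)H_1)(X_2Y_2 + (r−2)H_2) ⋯ (X_{r−1}Y_{r−1} + H_{r−1})(X_rY_r) = S_r · X_1⋯X_r Y_1⋯Y_r as A-linear operators (ℂ^m)^{⊗r} → (ℂ^n)^{⊗r}. -/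
set_option linter.unusedSectionVars false
set_option maxHeartbeats 1000000


/-!
STATEMENT 6: generalized Turnbull identity (operator form) for antisymmetric matrices:
S_r · (X₁Y₁ + (r−1)H₁)(X₂Y₂ + (r−2)H₂) ⋯ (X_rY_r) = S_r · X₁⋯X_r Y₁⋯Y_r
as A-linear operators (ℂ^m)^{⊗r} → (ℂ^n)^{⊗r}.
-/

namespace Stmt6

open Matrix

/-- The permutation operator `P^σ` on `(ℂ^n)^{⊗ r}`, as a matrix over `A`. -/
def Pmat (A : Type*) [Ring A] {n r : ℕ} (σ : Equiv.Perm (Fin r)) :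
    Matrix (Fin r → Fin n) (Fin r → Fin n) A :=
  Matrix.of fun I J => if I ∘ σ = J then 1 else 0

/-- The normalized symmetrizer `S_r = (1/r!) Σ_σ P^σ`. -/
noncomputable def Smat (A : Type*) [Ring A] [Algebra ℂ A] (n r : ℕ) :
    Matrix (Fin r → Fin n) (Fin r → Fin n) A :=
  ((r.factorial : ℂ))⁻¹ • ∑ σ : Equiv.Perm (Fin r), Pmat A σ

/-- The operator `(Z 1)_1 (Z 2)_2 ⋯ (Z r)_r`, where `(Z k)_k` is the `n × s` matrix
`Z k` acting on the k-th tensor factor; its `(I,K)`-entry is the ordered product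
`(Z 1)_{i₁k₁} (Z 2)_{i₂k₂} ⋯ (Z r)_{i_r k_r}`. -/
def chain {A : Type*} [Ring A] {n s r : ℕ} (Z : Fin r → Matrix (Fin n) (Fin s) A) :
    Matrix (Fin r → Fin n) (Fin r → Fin s) A :=
  Matrix.of fun I K => ((List.finRange r).map (fun t => Z t (I t) (K t))).prod


section ListLemmas
variable {M : Type*} {ι : Type*} [LinearOrder ι]

/-- windowed product -/
def wprod [Monoid M] (l : List ι) (P : ι → Prop) [DecidablePred P] (v : ι → M) : M :=
  (l.map fun t => if P t then v t else 1).prod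

variable [Monoid M]

lemma wprod_nil (P : ι → Prop) [DecidablePred P] (v : ι → M) : wprod [] P v = 1 := rfl

lemma wprod_cons (x : ι) (xs : List ι) (P : ι → Prop) [DecidablePred P] (v : ι → M) :
    wprod (x :: xs) P v = (if P x then v x else 1) * wprod xs P v := by
  simp [wprod]

lemma wprod_congr {l : List ι} {P Q : ι → Prop} [DecidablePred P] [DecidablePred Q] {v w : ι → M}
    (h1 : ∀ t ∈ l, P t ↔ Q t) (h2 : ∀ t ∈ l, Q t → v t = w t) :
    wprod l P v = wprod l Q w := by
  unfold wprod
  congr 1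
  apply List.map_congr_left
  intro a ha
  by_cases h : Q a
  · rw [if_pos h, if_pos ((h1 a ha).mpr h), h2 a ha h]
  · rw [if_neg h, if_neg (fun hp => h ((h1 a ha).mp hp))]

lemma wprod_eq_one {l : List ι} {P : ι → Prop} [DecidablePred P] {v : ι → M}
    (h : ∀ t ∈ l, ¬ P t) : wprod l P v = 1 := by
  induction l with
  | nil => rfl
  | cons x xs ih =>
      rw [wprod_cons, if_neg (h x (by simp)), one_mul]
      exact ih fun t ht => h t (by simp [ht])

lemma wprod_single {l : List ι} {q : ι} {v : ι → M}
    (hp : l.Pairwise (· < ·)) (hq : q ∈ l) : wprod l (· = q) v = v q := by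
  induction l with
  | nil => simp at hq
  | cons x xs ih =>
      rw [wprod_cons]
      rcases List.mem_cons.mp hq with h | h
      · subst h
        rw [if_pos rfl, wprod_eq_one, mul_one]
        intro t ht h'
        exact absurd (h' ▸ (List.pairwise_cons.mp hp).1 t ht) (lt_irrefl _)
      · have hx : x < q := (List.pairwise_cons.mp hp).1 q h
        rw [if_neg (fun h' : x = q => absurd (h' ▸ hx) (lt_irrefl _)), one_mul]
        exact ih (List.pairwise_cons.mp hp).2 h

lemma wprod_combine {l : List ι} {P Q : ι → Prop} [DecidablePred P] [DecidablePred Q]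
    {v w : ι → M}
    (hp : l.Pairwise (· < ·))
    (hd : ∀ t, ¬ (P t ∧ Q t))
    (hc : ∀ s ∈ l, ∀ t ∈ l, s < t → Q s → P t → Commute (w s) (v t)) :
    wprod l P v * wprod l Q w
      = wprod l (fun t => P t ∨ Q t) (fun t => if P t then v t else w t) := by
  induction l with
  | nil => simp [wprod_nil]
  | cons x xs ih =>
      obtain ⟨hhead, htail⟩ := List.pairwise_cons.mp hp
      have ihx := ih htail (fun s hs t ht => hc s (by simp [hs]) t (by simp [ht]))
      rw [wprod_cons, wprod_cons, wprod_cons]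
      by_cases hPx : P x
      · have hQx : ¬ Q x := fun h => hd x ⟨hPx, h⟩
        rw [if_pos hPx, if_neg hQx, one_mul, if_pos (Or.inl hPx), if_pos hPx]
        rw [mul_assoc, ihx]
      · by_cases hQx : Q x
        · rw [if_neg hPx, if_pos hQx, one_mul, if_pos (Or.inr hQx), if_neg hPx]
          have hcomm : Commute (w x) (wprod xs P v) := by
            apply Commute.list_prod_right
            intro z hz
            rcases List.mem_map.mp hz with ⟨t, ht, rfl⟩
            by_cases hPt : P t
            · rw [if_pos hPt]
              exact hc x (by simp) t (by simp [ht]) (hhead t ht) hQx hPt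
            · rw [if_neg hPt]; exact Commute.one_right _
          calc wprod xs P v * (w x * wprod xs Q w)
              = (wprod xs P v * w x) * wprod xs Q w := by rw [mul_assoc]
            _ = (w x * wprod xs P v) * wprod xs Q w := by rw [hcomm.eq]
            _ = w x * (wprod xs P v * wprod xs Q w) := by rw [mul_assoc]
            _ = w x * wprod xs (fun t => P t ∨ Q t) (fun t => if P t then v t else w t) := by
                  rw [ihx]
        · rw [if_neg hPx, if_neg hQx, one_mul, one_mul,
            if_neg (fun h : P x ∨ Q x => h.elim hPx hQx), one_mul, ihx]

/-- split a windowed product at an element q of the window -/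
lemma wprod_split {q : ι} {l : List ι} {P : ι → Prop} [DecidablePred P] {v : ι → M}
    (hp : l.Pairwise (· < ·)) (hq : q ∈ l) (hPq : P q)
    (hc : ∀ s ∈ l, ∀ t ∈ l, s < t → P s → P t → Commute (v s) (v t)) :
    wprod l P v = wprod l (fun t => P t ∧ t < q) v * (v q * wprod l (fun t => P t ∧ q < t) v) := by
  have h2 : wprod l (fun t => t = q) v * wprod l (fun t => P t ∧ q < t) v
      = wprod l (fun t => t = q ∨ (P t ∧ q < t)) (fun t => if t = q then v t else v t) := by
    apply wprod_combine hp
    · rintro t ⟨rfl, _, h⟩; exact lt_irrefl _ h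
    · rintro s hs t ht hst ⟨_, hqs⟩ rfl
      exact absurd (hqs.trans hst) (lt_irrefl _)
  have h3 : wprod l (fun t => P t ∧ t < q) v *
        wprod l (fun t => t = q ∨ (P t ∧ q < t)) v
      = wprod l (fun t => (P t ∧ t < q) ∨ (t = q ∨ (P t ∧ q < t)))
          (fun t => if P t ∧ t < q then v t else v t) := by
    apply wprod_combine hp
    · rintro t ⟨⟨_, h1⟩, h2⟩
      rcases h2 with rfl | ⟨_, h2⟩
      exacts [lt_irrefl _ h1, lt_irrefl _ (h1.trans h2)]
    · rintro s hs t ht hst hQ hP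
      rcases hQ with rfl | ⟨hPs, _⟩
      · exact absurd hst (not_lt.mpr hP.2.le)
      · exact hc s hs t ht hst hPs hP.1
  have e2 : wprod l (fun t => t = q ∨ (P t ∧ q < t)) (fun t => if t = q then v t else v t)
      = wprod l (fun t => t = q ∨ (P t ∧ q < t)) v := wprod_congr (by tauto) (by intros; simp)
  have e3 : wprod l (fun t => (P t ∧ t < q) ∨ (t = q ∨ (P t ∧ q < t)))
          (fun t => if P t ∧ t < q then v t else v t)
      = wprod l P v := by
    apply wprod_congr
    · intro t ht
      constructor
      · rintro (⟨h, _⟩ | rfl | ⟨h, _⟩) <;> first | exact h | exact hPq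
      · intro hPt
        rcases lt_trichotomy t q with h | rfl | h
        · exact Or.inl ⟨hPt, h⟩
        · exact Or.inr (Or.inl rfl)
        · exact Or.inr (Or.inr ⟨hPt, h⟩)
    · intros; simp
  rw [← e3, ← h3, ← e2, ← h2, wprod_single hp hq, ← mul_assoc]

end ListLemmas


section Expand
variable {R : Type*} {ι : Type*} [LinearOrder ι] [Ring R]

lemma wprod_mul_expand {l : List ι} (P : ι → Prop) [DecidablePred P] (v : ι → R) (y : R)
    (hp : l.Pairwise (· < ·)) :
    wprod l P v * y = y * wprod l P v +
      (l.map fun b => wprod l (fun t => P t ∧ t < b) v *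
        ((if P b then v b * y - y * v b else 0) * wprod l (fun t => P t ∧ b < t) v)).sum := by
  induction l with
  | nil => simp [wprod_nil]
  | cons x xs ih =>
      obtain ⟨hhead, htail⟩ := List.pairwise_cons.mp hp
      have IH := ih htail
      rw [List.map_cons, List.sum_cons]
      have hb : ∀ b ∈ xs,
          wprod (x :: xs) (fun t => P t ∧ t < b) v *
            ((if P b then v b * y - y * v b else 0) * wprod (x :: xs) (fun t => P t ∧ b < t) v)
          = (if P x then v x else 1) * (wprod xs (fun t => P t ∧ t < b) v *
              ((if P b then v b * y - y * v b else 0) * wprod xs (fun t => P t ∧ b < t) v)) := by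
        intro b hbmem
        have hxb : x < b := hhead b hbmem
        rw [wprod_cons, wprod_cons]
        rw [if_congr (show P x ∧ x < b ↔ P x by simp [hxb]) rfl rfl]
        rw [if_neg (show ¬ (P x ∧ b < x) from fun h => absurd (hxb.trans h.2) (lt_irrefl _)),
          one_mul, mul_assoc]
      rw [List.map_congr_left hb, List.sum_map_mul_left]
      have hpre : wprod (x :: xs) (fun t => P t ∧ t < x) v = 1 := by
        apply wprod_eq_one
        intro t ht
        rcases List.mem_cons.mp ht with rfl | ht'
        · exact fun h => lt_irrefl _ h.2
        · exact fun h => absurd (h.2.trans (hhead t ht')) (lt_irrefl _)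
      have hpost : wprod (x :: xs) (fun t => P t ∧ x < t) v = wprod xs P v := by
        rw [wprod_cons, if_neg (fun h : P x ∧ x < x => lt_irrefl _ h.2), one_mul]
        exact wprod_congr (fun t ht => by simp [hhead t ht]) (fun _ _ _ => rfl)
      rw [hpre, hpost, one_mul, wprod_cons]
      have hS : (xs.map fun b => wprod xs (fun t => P t ∧ t < b) v *
          ((if P b then v b * y - y * v b else 0) * wprod xs (fun t => P t ∧ b < t) v)).sum
          = wprod xs P v * y - y * wprod xs P v := by rw [IH]; abel
      rw [hS]
      by_cases hPx : P x
      · rw [if_pos hPx, if_pos hPx]; noncomm_ring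
      · rw [if_neg hPx, if_neg hPx]; noncomm_ring
end Expand



section SumUpdate
variable {κ : Type*} [Fintype κ] [DecidableEq κ] {β : Type*} [Fintype β] [DecidableEq β]
  {R : Type*} [Ring R]

lemma sum_update_eq (q : κ) (g1 g2 : (κ → β) → R) (u u' : β → (κ → β) → R)
    (hg1 : ∀ J a, g1 (Function.update J q a) = g1 J)
    (hg2 : ∀ J a, g2 (Function.update J q a) = g2 J)
    (hu : ∀ b J a, u b (Function.update J q a) = u b J)
    (hu' : ∀ b J a, u' b (Function.update J q a) = u' b J)
    (h : ∀ J, ∑ a, u a J = ∑ a, u' a J) :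
    ∑ J : κ → β, g1 J * u (J q) J * g2 J = ∑ J : κ → β, g1 J * u' (J q) J * g2 J := by
  rcases isEmpty_or_nonempty β with hβ | ⟨⟨a₀⟩⟩
  · have : IsEmpty (κ → β) := ⟨fun J => hβ.false (J q)⟩
    simp
  · set E := Equiv.funSplitAt q β with hE
    have key : ∀ (a : β) (g : {j // j ≠ q} → β),
        E.symm (a, g) = Function.update (E.symm (a₀, g)) q a := by
      intro a g
      funext j
      rcases eq_or_ne j q with rfl | hj
      · simp [hE, Equiv.funSplitAt_symm_apply]
      · simp [hE, Equiv.funSplitAt_symm_apply, hj, Function.update_of_ne hj]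
    have red : ∀ F : (κ → β) → R,
        ∑ J : κ → β, F J
          = ∑ g : {j // j ≠ q} → β, ∑ a : β, F (Function.update (E.symm (a₀, g)) q a) := by
      intro F
      rw [← Equiv.sum_comp E.symm F, Fintype.sum_prod_type, Finset.sum_comm]
      refine Finset.sum_congr rfl fun g _ => Finset.sum_congr rfl fun a _ => ?_
      rw [key]
    rw [red, red]
    refine Finset.sum_congr rfl fun g _ => ?_
    set J₀ := E.symm (a₀, g) with hJ₀
    have step : ∀ (w : β → (κ → β) → R), (∀ b J a, w b (Function.update J q a) = w b J) →
        ∑ a : β, g1 (Function.update J₀ q a) * w (Function.update J₀ q a q) (Function.update J₀ q a)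
          * g2 (Function.update J₀ q a) = g1 J₀ * (∑ a : β, w a J₀) * g2 J₀ := by
      intro w hw
      rw [Finset.mul_sum, Finset.sum_mul]
      refine Finset.sum_congr rfl fun a _ => ?_
      rw [Function.update_self, hg1, hg2, hw]
    rw [step u hu, step u' hu', h J₀]
end SumUpdate


section MoreList
variable {M : Type*} {ι : Type*} [LinearOrder ι] [Monoid M]

lemma commute_wprod {l : List ι} {P : ι → Prop} [DecidablePred P] {v : ι → M} {a : M}
    (h : ∀ t ∈ l, P t → Commute a (v t)) : Commute a (wprod l P v) := by
  apply Commute.list_prod_right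
  intro z hz
  rcases List.mem_map.mp hz with ⟨t, ht, rfl⟩
  by_cases hPt : P t
  · rw [if_pos hPt]; exact h t ht hPt
  · rw [if_neg hPt]; exact Commute.one_right _

lemma wprod_split_min {q : ι} {l : List ι} {P : ι → Prop} [DecidablePred P] {v : ι → M}
    (hp : l.Pairwise (· < ·)) (hq : q ∈ l) (hPq : P q)
    (hmin : ∀ t ∈ l, P t → ¬ t < q) :
    wprod l P v = v q * wprod l (fun t => P t ∧ q < t) v := by
  have h2 : wprod l (fun t => t = q) v * wprod l (fun t => P t ∧ q < t) v
      = wprod l (fun t => t = q ∨ (P t ∧ q < t)) (fun t => if t = q then v t else v t) := by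
    apply wprod_combine hp
    · rintro t ⟨rfl, _, h⟩; exact lt_irrefl _ h
    · rintro s hs t ht hst ⟨_, hqs⟩ rfl
      exact absurd (hqs.trans hst) (lt_irrefl _)
  rw [← wprod_single hp hq (v := v), h2]
  apply wprod_congr
  · intro t ht
    constructor
    · intro hPt
      rcases eq_or_ne t q with rfl | hne
      · exact Or.inl rfl
      · exact Or.inr ⟨hPt, lt_of_le_of_ne (not_lt.mp (hmin t ht hPt)) (Ne.symm hne)⟩
    · rintro (rfl | ⟨h, _⟩) <;> [exact hPq; exact h]
  · intros; simp

lemma wprod_split_max {q : ι} {l : List ι} {P : ι → Prop} [DecidablePred P] {v : ι → M}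
    (hp : l.Pairwise (· < ·)) (hq : q ∈ l) (hPq : P q)
    (hmax : ∀ t ∈ l, P t → ¬ q < t) :
    wprod l P v = wprod l (fun t => P t ∧ t < q) v * v q := by
  have h2 : wprod l (fun t => P t ∧ t < q) v * wprod l (fun t => t = q) v
      = wprod l (fun t => (P t ∧ t < q) ∨ t = q) (fun t => if P t ∧ t < q then v t else v t) := by
    apply wprod_combine hp
    · rintro t ⟨⟨_, h⟩, rfl⟩; exact lt_irrefl _ h
    · rintro s hs t ht hst rfl hP
      exact absurd hst (not_lt.mpr hP.2.le)
  rw [← wprod_single hp hq (v := v), h2]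
  apply wprod_congr
  · intro t ht
    constructor
    · intro hPt
      rcases eq_or_ne t q with rfl | hne
      · exact Or.inr rfl
      · exact Or.inl ⟨hPt, lt_of_le_of_ne (not_lt.mp (hmax t ht hPt)) hne⟩
    · rintro (⟨h, _⟩ | rfl) <;> [exact h; exact hPq]
  · intros; simp

end MoreList


section Main
open Matrix
variable {A : Type*} [Ring A] [Algebra ℂ A] {n m r : ℕ}
variable (X : Matrix (Fin n) (Fin n) A) (Y H : Matrix (Fin n) (Fin m) A)

/-- the partially processed operator entry -/
def fA (p : ℕ) (I : Fin r → Fin n) (K : Fin r → Fin m) : A :=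
  ∑ J : Fin r → Fin n,
    (((List.finRange r).map fun t : Fin r => if (t : ℕ) < p then
        (if J t = I t then (X * Y + (r - 1 - (t : ℕ)) • H) (I t) (K t) else 0)
      else X (I t) (J t)).prod) *
    (((List.finRange r).map fun t : Fin r => if (t : ℕ) < p then 1 else Y (J t) (K t)).prod)

lemma fA_zero (I : Fin r → Fin n) (K : Fin r → Fin m) :
    fA X Y H 0 I K = (chain (fun _ : Fin r => X) * chain (fun _ : Fin r => Y)) I K := by
  rw [Matrix.mul_apply, fA]
  refine Finset.sum_congr rfl fun J _ => ?_
  simp [chain]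

lemma fA_top (I : Fin r → Fin n) (K : Fin r → Fin m) :
    fA X Y H r I K = chain (fun k : Fin r => X * Y + (r - 1 - (k : ℕ)) • H) I K := by
  rw [fA]
  rw [Finset.sum_eq_single I]
  · simp only [chain, Matrix.of_apply]
    have h2 : (((List.finRange r).map fun t : Fin r => if (t : ℕ) < r then (1 : A)
        else Y (I t) (K t)).prod) = 1 := by
      apply List.prod_eq_one
      intro x hx
      rcases List.mem_map.mp hx with ⟨t, _, rfl⟩
      rw [if_pos t.isLt]
    rw [h2, mul_one]
    congr 1
    apply List.map_congr_left
    intro t _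
    rw [if_pos t.isLt]
    simp
  · intro J _ hJ
    have : ∃ t, J t ≠ I t := by
      by_contra hcon
      push_neg at hcon
      exact hJ (funext hcon)
    rcases this with ⟨t, ht⟩
    have : (0 : A) ∈ ((List.finRange r).map fun t : Fin r => if (t : ℕ) < r then
        (if J t = I t then (X * Y + (r - 1 - (t : ℕ)) • H) (I t) (K t) else 0)
      else X (I t) (J t)) := by
      refine List.mem_map.mpr ⟨t, List.mem_finRange t, ?_⟩
      rw [if_pos t.isLt, if_neg ht]
    rw [List.prod_eq_zero this, zero_mul]
  · intro h
    exact absurd (Finset.mem_univ I) h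

lemma smul_entry (M : Matrix (Fin r → Fin n) (Fin r → Fin m) A)
    (I : Fin r → Fin n) (K : Fin r → Fin m) :
    (Smat A n r * M) I K
      = ((r.factorial : ℂ))⁻¹ • ∑ σ : Equiv.Perm (Fin r), M (I ∘ σ) K := by
  rw [Smat, Matrix.smul_mul, Matrix.sum_mul, Matrix.smul_apply, Matrix.sum_apply]
  congr 1
  refine Finset.sum_congr rfl fun σ _ => ?_
  rw [Matrix.mul_apply]
  have : ∀ J, Pmat A σ I J * M J K = if I ∘ σ = J then M J K else 0 := by
    intro J
    simp only [Pmat, Matrix.of_apply, ite_mul, one_mul, zero_mul]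
  simp_rw [this]
  rw [Finset.sum_ite_eq]
  simp

end Main



section Step
open Matrix
variable {A : Type*} [Ring A] [Algebra ℂ A] {n m r : ℕ}
variable (X : Matrix (Fin n) (Fin n) A) (Y H : Matrix (Fin n) (Fin m) A)

def dCw (q : Fin r) (I : Fin r → Fin n) (K : Fin r → Fin m) (J : Fin r → Fin n) : A :=
  wprod (List.finRange r) (fun t => (t : ℕ) < (q : ℕ))
    (fun t => if J t = I t then (X * Y + (r - 1 - (t : ℕ)) • H) (I t) (K t) else 0)

def wxF (q : Fin r) (I J : Fin r → Fin n) : A :=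
  wprod (List.finRange r) (fun t => (q : ℕ) < (t : ℕ)) (fun t => X (I t) (J t))

def wyF (q : Fin r) (K : Fin r → Fin m) (J : Fin r → Fin n) : A :=
  wprod (List.finRange r) (fun t => (q : ℕ) < (t : ℕ)) (fun t => Y (J t) (K t))

def wmidF (q b : Fin r) (I J : Fin r → Fin n) : A :=
  wprod (List.finRange r) (fun t => (q : ℕ) < (t : ℕ) ∧ t < b) (fun t => X (I t) (J t))

def wpostF (q b : Fin r) (I J : Fin r → Fin n) : A :=
  wprod (List.finRange r) (fun t => (q : ℕ) < (t : ℕ) ∧ b < t) (fun t => X (I t) (J t))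

def eeF (q : Fin r) (I : Fin r → Fin n) (K : Fin r → Fin m) : A :=
  ∑ J : Fin r → Fin n, dCw X Y H q I K J *
    (if J q = I q then (X * Y) (I q) (K q) else 0) * (wxF X q I J * wyF Y q K J)

def wwF (q : Fin r) (I : Fin r → Fin n) (K : Fin r → Fin m) : A :=
  ∑ J : Fin r → Fin n, dCw X Y H q I K J *
    (if J q = I q then H (I q) (K q) else 0) * (wxF X q I J * wyF Y q K J)

def ccF (q b : Fin r) (I : Fin r → Fin n) (K : Fin r → Fin m) : A :=
  ∑ J : Fin r → Fin n, dCw X Y H q I K J * (X (I q) (J q) * (wmidF X q b I J *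
    ((if (q : ℕ) < (b : ℕ) then X (I b) (J b) * Y (J q) (K q) - Y (J q) (K q) * X (I b) (J b)
      else 0) * (wpostF X q b I J * wyF Y q K J))))

def uuF (q b : Fin r) (I : Fin r → Fin n) (K : Fin r → Fin m) : A :=
  ∑ J : Fin r → Fin n, dCw X Y H q I K J * (X (I q) (J q) * (wmidF X q b I J *
    ((if I b = J q then H (J b) (K q) else 0) * (wpostF X q b I J * wyF Y q K J))))

def vvF (q b : Fin r) (I : Fin r → Fin n) (K : Fin r → Fin m) : A :=
  ∑ J : Fin r → Fin n, dCw X Y H q I K J * (X (I q) (J q) * (wmidF X q b I J *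
    ((if J b = J q then H (I b) (K q) else 0) * (wpostF X q b I J * wyF Y q K J))))

lemma fA_decomp (q : Fin r) (I : Fin r → Fin n) (K : Fin r → Fin m) :
    fA X Y H (q : ℕ) I K
      = (∑ J : Fin r → Fin n, dCw X Y H q I K J * (X (I q) (J q) * Y (J q) (K q)) *
          (wxF X q I J * wyF Y q K J))
        + ∑ b : Fin r, ccF X Y H q b I K := by
  have hp := List.pairwise_lt_finRange r
  have hfirst : ∀ J : Fin r → Fin n,
      (((List.finRange r).map fun t : Fin r => if (t : ℕ) < (q : ℕ) then
          (if J t = I t then (X * Y + (r - 1 - (t : ℕ)) • H) (I t) (K t) else 0)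
        else X (I t) (J t)).prod)
      = dCw X Y H q I K J * (X (I q) (J q) * wxF X q I J) := by
    intro J
    have e1 := wprod_combine (l := List.finRange r)
      (P := fun t : Fin r => (t : ℕ) < (q : ℕ)) (Q := fun t => ¬ (t : ℕ) < (q : ℕ))
      (v := fun t => if J t = I t then (X * Y + (r - 1 - (t : ℕ)) • H) (I t) (K t) else 0)
      (w := fun t => X (I t) (J t)) hp (by tauto)
      (by
        intro s _ t _ hst hQ hP
        exact absurd (hst : (s : ℕ) < (t : ℕ)) (by omega))
    have e2 : (((List.finRange r).map fun t : Fin r => if (t : ℕ) < (q : ℕ) then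
          (if J t = I t then (X * Y + (r - 1 - (t : ℕ)) • H) (I t) (K t) else 0)
        else X (I t) (J t)).prod)
        = wprod (List.finRange r) (fun t => (t : ℕ) < (q : ℕ) ∨ ¬ (t : ℕ) < (q : ℕ))
          (fun t => if (t : ℕ) < (q : ℕ) then
            (if J t = I t then (X * Y + (r - 1 - (t : ℕ)) • H) (I t) (K t) else 0)
          else X (I t) (J t)) := by
      unfold wprod
      congr 1
      apply List.map_congr_left
      intro t _
      by_cases h : (t : ℕ) < (q : ℕ) <;> simp [h]
    have e3 : wprod (List.finRange r) (fun t : Fin r => ¬ (t : ℕ) < (q : ℕ))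
          (fun t => X (I t) (J t))
        = X (I q) (J q) * wprod (List.finRange r)
            (fun t : Fin r => ¬ (t : ℕ) < (q : ℕ) ∧ q < t) (fun t => X (I t) (J t)) := by
      exact wprod_split_min hp (List.mem_finRange q) (lt_irrefl _)
        (fun t _ hPt hlt => hPt hlt)
    have e4 : wprod (List.finRange r) (fun t : Fin r => ¬ (t : ℕ) < (q : ℕ) ∧ q < t)
          (fun t => X (I t) (J t)) = wxF X q I J := by
      apply wprod_congr
      · exact fun t _ => ⟨fun h => h.2, fun h => ⟨by omega, h⟩⟩
      · intros; rfl
    rw [e2, ← e1, e3, e4]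
    rfl
  have hsecond : ∀ J : Fin r → Fin n,
      (((List.finRange r).map fun t : Fin r => if (t : ℕ) < (q : ℕ) then 1
        else Y (J t) (K t)).prod)
      = Y (J q) (K q) * wyF Y q K J := by
    intro J
    have e2 : (((List.finRange r).map fun t : Fin r => if (t : ℕ) < (q : ℕ) then 1
          else Y (J t) (K t)).prod)
        = wprod (List.finRange r) (fun t : Fin r => ¬ (t : ℕ) < (q : ℕ))
            (fun t => Y (J t) (K t)) := by
      unfold wprod
      congr 1
      apply List.map_congr_left
      intro t _
      by_cases h : (t : ℕ) < (q : ℕ) <;> simp [h]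
    have e3 := wprod_split_min (l := List.finRange r)
      (P := fun t : Fin r => ¬ (t : ℕ) < (q : ℕ)) (v := fun t => Y (J t) (K t)) hp
      (List.mem_finRange q) (lt_irrefl _)
      (fun t _ hPt hlt => hPt hlt)
    have e4 : wprod (List.finRange r) (fun t : Fin r => ¬ (t : ℕ) < (q : ℕ) ∧ q < t)
          (fun t => Y (J t) (K t)) = wyF Y q K J := by
      apply wprod_congr
      · exact fun t _ => ⟨fun h => h.2, fun h => ⟨by omega, h⟩⟩
      · intros; rfl
    rw [e2, e3, e4]
  rw [fA]
  have hexp : ∀ J : Fin r → Fin n,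
      wxF X q I J * Y (J q) (K q) = Y (J q) (K q) * wxF X q I J +
        ((List.finRange r).map fun b => wmidF X q b I J *
          ((if (q : ℕ) < (b : ℕ) then X (I b) (J b) * Y (J q) (K q)
              - Y (J q) (K q) * X (I b) (J b) else 0) * wpostF X q b I J)).sum := by
    intro J
    exact wprod_mul_expand (fun t : Fin r => (q : ℕ) < (t : ℕ)) (fun t => X (I t) (J t))
      (Y (J q) (K q)) hp
  have hstep : ∀ J : Fin r → Fin n,
      dCw X Y H q I K J * (X (I q) (J q) * wxF X q I J) * (Y (J q) (K q) * wyF Y q K J)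
      = dCw X Y H q I K J * (X (I q) (J q) * Y (J q) (K q)) * (wxF X q I J * wyF Y q K J)
        + ∑ b : Fin r, dCw X Y H q I K J * (X (I q) (J q) * (wmidF X q b I J *
            ((if (q : ℕ) < (b : ℕ) then X (I b) (J b) * Y (J q) (K q)
                - Y (J q) (K q) * X (I b) (J b) else 0)
              * (wpostF X q b I J * wyF Y q K J)))) := by
    intro J
    have h1 : dCw X Y H q I K J * (X (I q) (J q) * wxF X q I J) * (Y (J q) (K q) * wyF Y q K J)
        = dCw X Y H q I K J * (X (I q) (J q) * ((wxF X q I J * Y (J q) (K q)) * wyF Y q K J)) := by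
      noncomm_ring
    rw [h1, hexp J, ← Fin.sum_univ_def]
    have h2 : ∀ S : A, dCw X Y H q I K J * (X (I q) (J q) *
          ((Y (J q) (K q) * wxF X q I J + S) * wyF Y q K J))
        = dCw X Y H q I K J * (X (I q) (J q) * Y (J q) (K q)) * (wxF X q I J * wyF Y q K J)
          + dCw X Y H q I K J * (X (I q) (J q) * (S * wyF Y q K J)) := by
      intro S; noncomm_ring
    rw [h2]
    congr 1
    rw [Finset.sum_mul, Finset.mul_sum, Finset.mul_sum]
    refine Finset.sum_congr rfl fun b _ => ?_
    noncomm_ring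
  calc ∑ J : Fin r → Fin n,
        (((List.finRange r).map fun t : Fin r => if (t : ℕ) < (q : ℕ) then
            (if J t = I t then (X * Y + (r - 1 - (t : ℕ)) • H) (I t) (K t) else 0)
          else X (I t) (J t)).prod) *
        (((List.finRange r).map fun t : Fin r => if (t : ℕ) < (q : ℕ) then 1
          else Y (J t) (K t)).prod)
      = ∑ J : Fin r → Fin n,
          (dCw X Y H q I K J * (X (I q) (J q) * Y (J q) (K q)) * (wxF X q I J * wyF Y q K J)
          + ∑ b : Fin r, dCw X Y H q I K J * (X (I q) (J q) * (wmidF X q b I J *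
              ((if (q : ℕ) < (b : ℕ) then X (I b) (J b) * Y (J q) (K q)
                  - Y (J q) (K q) * X (I b) (J b) else 0)
                * (wpostF X q b I J * wyF Y q K J))))) := by
        refine Finset.sum_congr rfl fun J _ => ?_
        rw [hfirst J, hsecond J, hstep J]
    _ = _ := by
        rw [Finset.sum_add_distrib]
        congr 1
        rw [Finset.sum_comm]
        rfl

end Step

section Step2
open Matrix
variable {A : Type*} [Ring A] [Algebra ℂ A] {n m r : ℕ}
variable (X : Matrix (Fin n) (Fin n) A) (Y H : Matrix (Fin n) (Fin m) A)

lemma dCw_update (q : Fin r) (I : Fin r → Fin n) (K : Fin r → Fin m) (J : Fin r → Fin n)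
    (a : Fin n) : dCw X Y H q I K (Function.update J q a) = dCw X Y H q I K J := by
  apply wprod_congr (fun t _ => Iff.rfl)
  intro t _ ht
  have hne : t ≠ q := fun h => by subst h; exact lt_irrefl _ ht
  rw [Function.update_of_ne hne]

lemma wx_update (q : Fin r) (I J : Fin r → Fin n) (a : Fin n) :
    wxF X q I (Function.update J q a) = wxF X q I J := by
  apply wprod_congr (fun t _ => Iff.rfl)
  intro t _ ht
  have hne : t ≠ q := fun h => by subst h; exact lt_irrefl _ ht
  rw [Function.update_of_ne hne]

lemma wy_update (q : Fin r) (K : Fin r → Fin m) (J : Fin r → Fin n) (a : Fin n) :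
    wyF Y q K (Function.update J q a) = wyF Y q K J := by
  apply wprod_congr (fun t _ => Iff.rfl)
  intro t _ ht
  have hne : t ≠ q := fun h => by subst h; exact lt_irrefl _ ht
  rw [Function.update_of_ne hne]

lemma wmid_update (q b : Fin r) (I J : Fin r → Fin n) (a : Fin n) :
    wmidF X q b I (Function.update J q a) = wmidF X q b I J := by
  apply wprod_congr (fun t _ => Iff.rfl)
  intro t _ ht
  have hne : t ≠ q := fun h => by subst h; exact lt_irrefl _ ht.1
  rw [Function.update_of_ne hne]

lemma wpost_update (q b : Fin r) (I J : Fin r → Fin n) (a : Fin n) :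
    wpostF X q b I (Function.update J q a) = wpostF X q b I J := by
  apply wprod_congr (fun t _ => Iff.rfl)
  intro t _ ht
  have hne : t ≠ q := fun h => by subst h; exact lt_irrefl _ ht.1
  rw [Function.update_of_ne hne]

lemma Ee_eq (q : Fin r) (I : Fin r → Fin n) (K : Fin r → Fin m) :
    (∑ J : Fin r → Fin n, dCw X Y H q I K J * (X (I q) (J q) * Y (J q) (K q)) *
        (wxF X q I J * wyF Y q K J)) = eeF X Y H q I K := by
  exact sum_update_eq q (fun J => dCw X Y H q I K J) (fun J => wxF X q I J * wyF Y q K J)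
    (fun a _ => X (I q) a * Y a (K q))
    (fun a _ => if a = I q then (X * Y) (I q) (K q) else 0)
    (fun J a => dCw_update X Y H q I K J a)
    (fun J a => by
      show wxF X q I (Function.update J q a) * wyF Y q K (Function.update J q a) = _
      rw [wx_update, wy_update])
    (fun b J a => rfl) (fun b J a => rfl)
    (fun J => by rw [Finset.sum_ite_eq']; simp [Matrix.mul_apply])

lemma fA_succ (q : Fin r) (I : Fin r → Fin n) (K : Fin r → Fin m) :
    fA X Y H ((q : ℕ) + 1) I K
      = eeF X Y H q I K + (r - 1 - (q : ℕ)) • wwF X Y H q I K := by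
  have hp := List.pairwise_lt_finRange r
  have hfirst : ∀ J : Fin r → Fin n,
      (((List.finRange r).map fun t : Fin r => if (t : ℕ) < (q : ℕ) + 1 then
          (if J t = I t then (X * Y + (r - 1 - (t : ℕ)) • H) (I t) (K t) else 0)
        else X (I t) (J t)).prod)
      = dCw X Y H q I K J *
          (if J q = I q then (X * Y + (r - 1 - (q : ℕ)) • H) (I q) (K q) else 0) *
          wxF X q I J := by
    intro J
    have e1 := wprod_combine (l := List.finRange r)
      (P := fun t : Fin r => (t : ℕ) < (q : ℕ) + 1) (Q := fun t => ¬ (t : ℕ) < (q : ℕ) + 1)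
      (v := fun t => if J t = I t then (X * Y + (r - 1 - (t : ℕ)) • H) (I t) (K t) else 0)
      (w := fun t => X (I t) (J t)) hp (by tauto)
      (by
        intro s _ t _ hst hQ hP
        exact absurd (hst : (s : ℕ) < (t : ℕ)) (by omega))
    have e2 : (((List.finRange r).map fun t : Fin r => if (t : ℕ) < (q : ℕ) + 1 then
          (if J t = I t then (X * Y + (r - 1 - (t : ℕ)) • H) (I t) (K t) else 0)
        else X (I t) (J t)).prod)
        = wprod (List.finRange r) (fun t => (t : ℕ) < (q : ℕ) + 1 ∨ ¬ (t : ℕ) < (q : ℕ) + 1)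
          (fun t => if (t : ℕ) < (q : ℕ) + 1 then
            (if J t = I t then (X * Y + (r - 1 - (t : ℕ)) • H) (I t) (K t) else 0)
          else X (I t) (J t)) := by
      unfold wprod
      congr 1
      apply List.map_congr_left
      intro t _
      by_cases h : (t : ℕ) < (q : ℕ) + 1 <;> simp [h]
    have e3 : wprod (List.finRange r) (fun t : Fin r => (t : ℕ) < (q : ℕ) + 1)
          (fun t => if J t = I t then (X * Y + (r - 1 - (t : ℕ)) • H) (I t) (K t) else 0)
        = dCw X Y H q I K J *
            (if J q = I q then (X * Y + (r - 1 - (q : ℕ)) • H) (I q) (K q) else 0) := by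
      have := wprod_split_max (q := q) (l := List.finRange r)
        (P := fun t : Fin r => (t : ℕ) < (q : ℕ) + 1)
        (v := fun t => if J t = I t then (X * Y + (r - 1 - (t : ℕ)) • H) (I t) (K t) else 0)
        hp (List.mem_finRange q) (by omega)
        (fun t _ hPt hlt => by exact absurd (hlt : (q : ℕ) < (t : ℕ)) (by omega))
      rw [this]
      congr 1
      apply wprod_congr
      · exact fun t _ => ⟨fun h => h.2, fun h => ⟨by omega, h⟩⟩
      · intros; rfl
    have e4 : wprod (List.finRange r) (fun t : Fin r => ¬ (t : ℕ) < (q : ℕ) + 1)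
          (fun t => X (I t) (J t)) = wxF X q I J := by
      apply wprod_congr
      · exact fun t _ => ⟨fun h => by omega, fun h => by omega⟩
      · intros; rfl
    rw [e2, ← e1, e3, e4]
  have hsecond : ∀ J : Fin r → Fin n,
      (((List.finRange r).map fun t : Fin r => if (t : ℕ) < (q : ℕ) + 1 then 1
        else Y (J t) (K t)).prod) = wyF Y q K J := by
    intro J
    unfold wyF wprod
    congr 1
    apply List.map_congr_left
    intro t _
    by_cases h : (t : ℕ) < (q : ℕ) + 1
    · rw [if_pos h, if_neg (by omega)]
    · rw [if_neg h, if_pos (by omega)]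
  rw [fA]
  have key : ∀ J : Fin r → Fin n,
      dCw X Y H q I K J *
          (if J q = I q then (X * Y + (r - 1 - (q : ℕ)) • H) (I q) (K q) else 0) *
          wxF X q I J * wyF Y q K J
      = dCw X Y H q I K J * (if J q = I q then (X * Y) (I q) (K q) else 0) *
          (wxF X q I J * wyF Y q K J)
        + (r - 1 - (q : ℕ)) • (dCw X Y H q I K J * (if J q = I q then H (I q) (K q) else 0) *
            (wxF X q I J * wyF Y q K J)) := by
    intro J
    have hmid : (if J q = I q then (X * Y + (r - 1 - (q : ℕ)) • H) (I q) (K q) else 0)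
        = (if J q = I q then (X * Y) (I q) (K q) else 0)
          + (r - 1 - (q : ℕ)) • (if J q = I q then H (I q) (K q) else 0) := by
      by_cases h : J q = I q
      · simp [h, Matrix.add_apply]
      · simp [h]
    rw [hmid]
    simp only [mul_add, add_mul, mul_smul_comm, smul_mul_assoc, mul_assoc]
  calc (∑ J : Fin r → Fin n, _) = ∑ J : Fin r → Fin n,
        (dCw X Y H q I K J * (if J q = I q then (X * Y) (I q) (K q) else 0) *
          (wxF X q I J * wyF Y q K J)
        + (r - 1 - (q : ℕ)) • (dCw X Y H q I K J * (if J q = I q then H (I q) (K q) else 0) *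
            (wxF X q I J * wyF Y q K J))) := by
        refine Finset.sum_congr rfl fun J _ => ?_
        rw [hfirst J, hsecond J, key J]
    _ = _ := by
        rw [Finset.sum_add_distrib, ← Finset.smul_sum]
        rfl

lemma cc_zero (q b : Fin r) (I : Fin r → Fin n) (K : Fin r → Fin m)
    (h : ¬ (q : ℕ) < (b : ℕ)) : ccF X Y H q b I K = 0 := by
  unfold ccF
  rw [Finset.sum_eq_zero]
  intro J _
  rw [if_neg h]
  simp

lemma cc_split (q b : Fin r) (I : Fin r → Fin n) (K : Fin r → Fin m)
    (hXY : ∀ i j k l, X i j * Y k l - Y k l * X i j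
        = -((if i = k then H j l else 0) - (if j = k then H i l else 0)))
    (h : (q : ℕ) < (b : ℕ)) :
    ccF X Y H q b I K = vvF X Y H q b I K - uuF X Y H q b I K := by
  unfold ccF vvF uuF
  rw [← Finset.sum_sub_distrib]
  refine Finset.sum_congr rfl fun J _ => ?_
  rw [if_pos h, hXY (I b) (J b) (J q) (K q), neg_sub]
  noncomm_ring

end Step2

section Step3
open Matrix Equiv
variable {A : Type*} [Ring A] [Algebra ℂ A] {n m r : ℕ}
variable (X : Matrix (Fin n) (Fin n) A) (Y H : Matrix (Fin n) (Fin m) A)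

lemma shuffle1 {d x w e p : A} (h3 : Commute x w) :
    d * (x * (w * (e * p))) = d * w * (x * e) * p := by
  simp only [mul_assoc]
  congr 1
  rw [← mul_assoc x w, h3.eq, mul_assoc]

lemma shuffle2 {d x w h p y : A} (h1 : Commute h x) (h2 : Commute h w) (h3 : Commute x w) :
    d * (x * (w * (h * (p * y)))) = d * h * (w * (x * p) * y) := by
  simp only [mul_assoc]
  congr 1
  rw [← mul_assoc x w, h3.eq, mul_assoc w x, ← mul_assoc x h, ← h1.eq, mul_assoc h x,
    ← mul_assoc w h, ← h2.eq, mul_assoc h w]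

variable {q b : Fin r}

lemma dCw_swapI (hqb : (q : ℕ) < (b : ℕ)) (I : Fin r → Fin n) (K : Fin r → Fin m)
    (J : Fin r → Fin n) :
    dCw X Y H q (I ∘ Equiv.swap q b) K J = dCw X Y H q I K J := by
  apply wprod_congr (fun t _ => Iff.rfl)
  intro t _ ht
  have h1 : t ≠ q := fun h => by subst h; exact absurd ht (lt_irrefl _)
  have h2 : t ≠ b := fun h => by subst h; omega
  simp [Function.comp, Equiv.swap_apply_of_ne_of_ne h1 h2]

lemma wmid_swapI (hqb : (q : ℕ) < (b : ℕ)) (I J : Fin r → Fin n) :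
    wmidF X q b (I ∘ Equiv.swap q b) J = wmidF X q b I J := by
  apply wprod_congr (fun t _ => Iff.rfl)
  intro t _ ht
  have h1 : t ≠ q := fun h => by subst h; exact absurd ht.1 (lt_irrefl _)
  have h2 : t ≠ b := fun h => by subst h; exact absurd ht.2 (lt_irrefl _)
  simp [Function.comp, Equiv.swap_apply_of_ne_of_ne h1 h2]

lemma wpost_swapI (hqb : (q : ℕ) < (b : ℕ)) (I J : Fin r → Fin n) :
    wpostF X q b (I ∘ Equiv.swap q b) J = wpostF X q b I J := by
  apply wprod_congr (fun t _ => Iff.rfl)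
  intro t _ ht
  have h1 : t ≠ q := fun h => by subst h; exact absurd ht.1 (lt_irrefl _)
  have h2 : t ≠ b := fun h => by subst h; exact absurd ht.2 (lt_irrefl _)
  simp [Function.comp, Equiv.swap_apply_of_ne_of_ne h1 h2]

lemma dCw_swapJ (hqb : (q : ℕ) < (b : ℕ)) (I : Fin r → Fin n) (K : Fin r → Fin m)
    (J : Fin r → Fin n) :
    dCw X Y H q I K (J ∘ Equiv.swap q b) = dCw X Y H q I K J := by
  apply wprod_congr (fun t _ => Iff.rfl)
  intro t _ ht
  have h1 : t ≠ q := fun h => by subst h; exact absurd ht (lt_irrefl _)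
  have h2 : t ≠ b := fun h => by subst h; omega
  simp [Function.comp, Equiv.swap_apply_of_ne_of_ne h1 h2]

lemma wmid_swapJ (hqb : (q : ℕ) < (b : ℕ)) (I J : Fin r → Fin n) :
    wmidF X q b I (J ∘ Equiv.swap q b) = wmidF X q b I J := by
  apply wprod_congr (fun t _ => Iff.rfl)
  intro t _ ht
  have h1 : t ≠ q := fun h => by subst h; exact absurd ht.1 (lt_irrefl _)
  have h2 : t ≠ b := fun h => by subst h; exact absurd ht.2 (lt_irrefl _)
  simp [Function.comp, Equiv.swap_apply_of_ne_of_ne h1 h2]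

lemma wpost_swapJ (hqb : (q : ℕ) < (b : ℕ)) (I J : Fin r → Fin n) :
    wpostF X q b I (J ∘ Equiv.swap q b) = wpostF X q b I J := by
  apply wprod_congr (fun t _ => Iff.rfl)
  intro t _ ht
  have h1 : t ≠ q := fun h => by subst h; exact absurd ht.1 (lt_irrefl _)
  have h2 : t ≠ b := fun h => by subst h; exact absurd ht.2 (lt_irrefl _)
  simp [Function.comp, Equiv.swap_apply_of_ne_of_ne h1 h2]

lemma uu_norm1 (hXcomm : ∀ i j k l, Commute (X i j) (X k l)) (hqb : (q : ℕ) < (b : ℕ))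
    (I : Fin r → Fin n) (K : Fin r → Fin m) :
    uuF X Y H q b I K = ∑ J : Fin r → Fin n,
      (dCw X Y H q I K J * wmidF X q b I J) *
        (if I b = J q then X (I q) (I b) * H (J b) (K q) else 0) *
        (wpostF X q b I J * wyF Y q K J) := by
  unfold uuF
  refine Finset.sum_congr rfl fun J _ => ?_
  have hcomm : Commute (X (I q) (J q)) (wmidF X q b I J) := by
    apply commute_wprod
    intro t _ _
    exact hXcomm _ _ _ _
  rw [shuffle1 hcomm]
  congr 2
  rw [mul_ite, mul_zero]
  by_cases h : I b = J q
  · rw [if_pos h, if_pos h, ← h]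
  · rw [if_neg h, if_neg h]

lemma uu_swap (hXanti : ∀ i j, X i j = - X j i)
    (hXcomm : ∀ i j k l, Commute (X i j) (X k l))
    (hqb : (q : ℕ) < (b : ℕ)) (I : Fin r → Fin n) (K : Fin r → Fin m) :
    uuF X Y H q b (I ∘ Equiv.swap q b) K = - uuF X Y H q b I K := by
  rw [uu_norm1 X Y H hXcomm hqb (I ∘ Equiv.swap q b) K, uu_norm1 X Y H hXcomm hqb I K]
  have hL : (∑ J : Fin r → Fin n,
        (dCw X Y H q (I ∘ Equiv.swap q b) K J * wmidF X q b (I ∘ Equiv.swap q b) J) *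
          (if (I ∘ Equiv.swap q b) b = J q then
            X ((I ∘ Equiv.swap q b) q) ((I ∘ Equiv.swap q b) b) * H (J b) (K q) else 0) *
          (wpostF X q b (I ∘ Equiv.swap q b) J * wyF Y q K J))
      = ∑ J : Fin r → Fin n,
        (dCw X Y H q I K J * wmidF X q b I J) *
          (if I q = J q then X (I b) (I q) * H (J b) (K q) else 0) *
          (wpostF X q b I J * wyF Y q K J) := by
    refine Finset.sum_congr rfl fun J _ => ?_
    rw [dCw_swapI X Y H hqb, wmid_swapI X hqb, wpost_swapI X hqb]
    congr 2
    simp [Equiv.swap_apply_left, Equiv.swap_apply_right]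
  rw [hL]
  have hbq : b ≠ q := fun h => by subst h; exact absurd hqb (lt_irrefl _)
  have hmain : (∑ J : Fin r → Fin n,
        (dCw X Y H q I K J * wmidF X q b I J) *
          (if I q = J q then X (I b) (I q) * H (J b) (K q) else 0) *
          (wpostF X q b I J * wyF Y q K J))
      = ∑ J : Fin r → Fin n,
        (dCw X Y H q I K J * wmidF X q b I J) *
          (- (if I b = J q then X (I q) (I b) * H (J b) (K q) else 0)) *
          (wpostF X q b I J * wyF Y q K J) := by
    apply sum_update_eq q
      (fun J => dCw X Y H q I K J * wmidF X q b I J)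
      (fun J => wpostF X q b I J * wyF Y q K J)
      (fun a J => if I q = a then X (I b) (I q) * H (J b) (K q) else 0)
      (fun a J => - (if I b = a then X (I q) (I b) * H (J b) (K q) else 0))
    · intro J a
      show dCw X Y H q I K (Function.update J q a) * wmidF X q b I (Function.update J q a) = _
      rw [dCw_update, wmid_update]
    · intro J a
      show wpostF X q b I (Function.update J q a) * wyF Y q K (Function.update J q a) = _
      rw [wpost_update, wy_update]
    · intro c J a
      simp only [Function.update_of_ne hbq]
    · intro c J a
      simp only [Function.update_of_ne hbq]
    · intro J
      rw [Finset.sum_ite_eq, Finset.sum_neg_distrib, Finset.sum_ite_eq]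
      simp [hXanti (I b) (I q)]
  rw [hmain, ← Finset.sum_neg_distrib]
  refine Finset.sum_congr rfl fun J _ => ?_
  rw [mul_neg, neg_mul]

end Step3

section Step4
open Matrix Equiv
variable {A : Type*} [Ring A] [Algebra ℂ A] {n m r : ℕ}
variable (X : Matrix (Fin n) (Fin n) A) (Y H : Matrix (Fin n) (Fin m) A)
variable {q b : Fin r}

lemma vv_swap (hXcomm : ∀ i j k l, Commute (X i j) (X k l))
    (hXH : ∀ i j k l, Commute (X i j) (H k l))
    (hqb : (q : ℕ) < (b : ℕ)) (I : Fin r → Fin n) (K : Fin r → Fin m) :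
    vvF X Y H q b (I ∘ Equiv.swap q b) K = wwF X Y H q I K := by
  have hbq : b ≠ q := fun h => by subst h; exact absurd hqb (lt_irrefl _)
  have hτ : ∀ (t : Fin r), t ≠ q → t ≠ b → Equiv.swap q b t = t :=
    fun t h1 h2 => Equiv.swap_apply_of_ne_of_ne h1 h2
  have hreindex : ∀ F : (Fin r → Fin n) → A,
      ∑ J : Fin r → Fin n, F J = ∑ J : Fin r → Fin n, F (J ∘ Equiv.swap q b) := by
    intro F
    refine (Fintype.sum_bijective (fun J : Fin r → Fin n => J ∘ Equiv.swap q b)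
      (Function.Involutive.bijective fun J => funext fun t => by
        simp [Function.comp, Equiv.swap_apply_self]) _ _ fun J => rfl).symm
  calc vvF X Y H q b (I ∘ Equiv.swap q b) K
      = ∑ J : Fin r → Fin n, dCw X Y H q I K J * (X (I b) (J q) * (wmidF X q b I J *
          ((if J b = J q then H (I q) (K q) else 0) * (wpostF X q b I J * wyF Y q K J)))) := by
        unfold vvF
        refine Finset.sum_congr rfl fun J _ => ?_
        rw [dCw_swapI X Y H hqb, wmid_swapI X hqb, wpost_swapI X hqb]
        simp only [Function.comp_apply, Equiv.swap_apply_left, Equiv.swap_apply_right]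
    _ = ∑ J : Fin r → Fin n, dCw X Y H q I K J * (X (I b) (J b) * (wmidF X q b I J *
          ((if J b = J q then H (I q) (K q) else 0) * (wpostF X q b I J * wyF Y q K J)))) := by
        rw [hreindex]
        refine Finset.sum_congr rfl fun J _ => ?_
        rw [dCw_swapJ X Y H hqb, wmid_swapJ X hqb, wpost_swapJ X hqb]
        simp only [Function.comp_apply, Equiv.swap_apply_left, Equiv.swap_apply_right]
        by_cases h : J q = J b
        · rw [if_pos h, if_pos h.symm]
          have hwy : wyF Y q K (J ∘ Equiv.swap q b) = wyF Y q K J := by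
            apply wprod_congr (fun t _ => Iff.rfl)
            intro t _ ht
            rcases eq_or_ne t b with rfl | htb
            · simp only [Function.comp_apply, Equiv.swap_apply_right]
              rw [← h]
            · have htq : t ≠ q := fun hh => by subst hh; exact absurd ht (lt_irrefl _)
              simp [Function.comp, hτ t htq htb]
          rw [hwy]
        · rw [if_neg h, if_neg (Ne.symm h)]
          simp
    _ = ∑ J : Fin r → Fin n, dCw X Y H q I K J * (if J b = J q then H (I q) (K q) else 0) *
          (wxF X q I J * wyF Y q K J) := by
        refine Finset.sum_congr rfl fun J _ => ?_
        have c1 : Commute (if J b = J q then H (I q) (K q) else 0) (X (I b) (J b)) := by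
          by_cases h : J b = J q
          · rw [if_pos h]; exact (hXH _ _ _ _).symm
          · rw [if_neg h]; exact Commute.zero_left _
        have c2 : Commute (if J b = J q then H (I q) (K q) else 0) (wmidF X q b I J) := by
          apply commute_wprod
          intro t _ _
          by_cases h : J b = J q
          · rw [if_pos h]; exact (hXH _ _ _ _).symm
          · rw [if_neg h]; exact Commute.zero_left _
        have c3 : Commute (X (I b) (J b)) (wmidF X q b I J) := by
          apply commute_wprod
          intro t _ _
          exact hXcomm _ _ _ _
        rw [shuffle2 c1 c2 c3]
        have hsplit : wxF X q I J = wmidF X q b I J * (X (I b) (J b) * wpostF X q b I J) :=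
          wprod_split (List.pairwise_lt_finRange r) (List.mem_finRange b) hqb
            (fun s _ t _ hst hs ht => hXcomm _ _ _ _)
        rw [← hsplit]
    _ = wwF X Y H q I K := by
        refine sum_update_eq q (fun J => dCw X Y H q I K J)
          (fun J => wxF X q I J * wyF Y q K J)
          (fun a J => if J b = a then H (I q) (K q) else 0)
          (fun a J => if a = I q then H (I q) (K q) else 0)
          (fun J a => dCw_update X Y H q I K J a)
          (fun J a => by
            show wxF X q I (Function.update J q a) * wyF Y q K (Function.update J q a) = _
            rw [wx_update, wy_update])
          (fun c J a => by simp only [Function.update_of_ne hbq])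
          (fun c J a => rfl)
          (fun J => by rw [Finset.sum_ite_eq, Finset.sum_ite_eq']; simp)

end Step4

section Step5
open Matrix Equiv
variable {A : Type*} [Ring A] [Algebra ℂ A] {n m r : ℕ}
variable (X : Matrix (Fin n) (Fin n) A) (Y H : Matrix (Fin n) (Fin m) A)

lemma step_lemma (hXanti : ∀ i j, X i j = - X j i)
    (hXcomm : ∀ i j k l, Commute (X i j) (X k l))
    (hXY : ∀ i j k l, X i j * Y k l - Y k l * X i j
        = -((if i = k then H j l else 0) - (if j = k then H i l else 0)))
    (hXH : ∀ i j k l, Commute (X i j) (H k l))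
    (q : Fin r) (I : Fin r → Fin n) (K : Fin r → Fin m) :
    ∑ σ : Equiv.Perm (Fin r), fA X Y H (q : ℕ) (I ∘ σ) K
      = ∑ σ : Equiv.Perm (Fin r), fA X Y H ((q : ℕ) + 1) (I ∘ σ) K := by
  have hcompτ : ∀ (σ τ : Equiv.Perm (Fin r)), I ∘ ⇑(σ * τ) = (I ∘ ⇑σ) ∘ ⇑τ := by
    intro σ τ; funext t; simp [Equiv.Perm.mul_apply]
  have huu : ∀ b : Fin r, (q : ℕ) < (b : ℕ) →
      (∑ σ : Equiv.Perm (Fin r), uuF X Y H q b (I ∘ σ) K) = 0 := by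
    intro b hb
    have h2 : (∑ σ : Equiv.Perm (Fin r), uuF X Y H q b (I ∘ σ) K)
        = - ∑ σ : Equiv.Perm (Fin r), uuF X Y H q b (I ∘ σ) K := by
      conv_lhs => rw [← Equiv.sum_comp (Equiv.mulRight (Equiv.swap q b))
        (fun σ => uuF X Y H q b (I ∘ σ) K)]
      rw [← Finset.sum_neg_distrib]
      simp only [Equiv.coe_mulRight]
      refine Finset.sum_congr rfl fun σ _ => ?_
      rw [hcompτ, uu_swap X Y H hXanti hXcomm hb]
    have h3 : (∑ σ : Equiv.Perm (Fin r), uuF X Y H q b (I ∘ σ) K)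
        + (∑ σ : Equiv.Perm (Fin r), uuF X Y H q b (I ∘ σ) K) = 0 :=
      add_eq_zero_iff_eq_neg.mpr h2
    calc (∑ σ : Equiv.Perm (Fin r), uuF X Y H q b (I ∘ σ) K)
        = (2 : ℂ)⁻¹ • ((2 : ℂ) • ∑ σ : Equiv.Perm (Fin r), uuF X Y H q b (I ∘ σ) K) := by
          rw [smul_smul]; norm_num
      _ = 0 := by rw [two_smul, h3, smul_zero]
  have hvv : ∀ b : Fin r, (q : ℕ) < (b : ℕ) →
      (∑ σ : Equiv.Perm (Fin r), vvF X Y H q b (I ∘ σ) K)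
        = ∑ σ : Equiv.Perm (Fin r), wwF X Y H q (I ∘ σ) K := by
    intro b hb
    conv_lhs => rw [← Equiv.sum_comp (Equiv.mulRight (Equiv.swap q b))
      (fun σ => vvF X Y H q b (I ∘ σ) K)]
    simp only [Equiv.coe_mulRight]
    refine Finset.sum_congr rfl fun σ _ => ?_
    rw [hcompτ, vv_swap X Y H hXcomm hXH hb]
  calc ∑ σ : Equiv.Perm (Fin r), fA X Y H (q : ℕ) (I ∘ σ) K
      = ∑ σ : Equiv.Perm (Fin r), (eeF X Y H q (I ∘ σ) K + ∑ b : Fin r, ccF X Y H q b (I ∘ σ) K) := by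
        refine Finset.sum_congr rfl fun σ _ => ?_
        rw [fA_decomp X Y H q (I ∘ σ) K, Ee_eq X Y H q (I ∘ σ) K]
    _ = (∑ σ : Equiv.Perm (Fin r), eeF X Y H q (I ∘ σ) K)
        + ∑ b : Fin r, ∑ σ : Equiv.Perm (Fin r), ccF X Y H q b (I ∘ σ) K := by
        rw [Finset.sum_add_distrib, Finset.sum_comm]
    _ = (∑ σ : Equiv.Perm (Fin r), eeF X Y H q (I ∘ σ) K)
        + (r - 1 - (q : ℕ)) • ∑ σ : Equiv.Perm (Fin r), wwF X Y H q (I ∘ σ) K := by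
        congr 1
        have hz : ∀ b : Fin r, b ∈ Finset.univ → b ∉ Finset.Ioi q →
            (∑ σ : Equiv.Perm (Fin r), ccF X Y H q b (I ∘ σ) K) = 0 := by
          intro b _ hb
          have hqb' : ¬ (q : ℕ) < (b : ℕ) := by
            intro hcon
            exact hb (Finset.mem_Ioi.mpr hcon)
          exact Finset.sum_eq_zero fun σ _ => cc_zero X Y H q b _ K hqb'
        rw [← Finset.sum_subset (Finset.subset_univ (Finset.Ioi q)) hz]
        have hw : ∀ b ∈ Finset.Ioi q,
            (∑ σ : Equiv.Perm (Fin r), ccF X Y H q b (I ∘ σ) K)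
              = ∑ σ : Equiv.Perm (Fin r), wwF X Y H q (I ∘ σ) K := by
          intro b hb
          have hqb'' : q < b := Finset.mem_Ioi.mp hb
          have hqb' : (q : ℕ) < (b : ℕ) := hqb'' 
          calc (∑ σ : Equiv.Perm (Fin r), ccF X Y H q b (I ∘ σ) K)
              = ∑ σ : Equiv.Perm (Fin r),
                  (vvF X Y H q b (I ∘ σ) K - uuF X Y H q b (I ∘ σ) K) :=
                Finset.sum_congr rfl fun σ _ => cc_split X Y H q b _ K hXY hqb'
            _ = (∑ σ : Equiv.Perm (Fin r), vvF X Y H q b (I ∘ σ) K)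
                - ∑ σ : Equiv.Perm (Fin r), uuF X Y H q b (I ∘ σ) K := Finset.sum_sub_distrib _ _
            _ = (∑ σ : Equiv.Perm (Fin r), wwF X Y H q (I ∘ σ) K) - 0 := by
                rw [hvv b hqb', huu b hqb']
            _ = ∑ σ : Equiv.Perm (Fin r), wwF X Y H q (I ∘ σ) K := sub_zero _
        rw [Finset.sum_congr rfl hw, Finset.sum_const, Fin.card_Ioi]
    _ = ∑ σ : Equiv.Perm (Fin r), fA X Y H ((q : ℕ) + 1) (I ∘ σ) K := by
        rw [Finset.smul_sum, ← Finset.sum_add_distrib]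
        exact Finset.sum_congr rfl fun σ _ => (fA_succ X Y H q (I ∘ σ) K).symm

end Step5

theorem turnbull_antisymmetric_operator
    {A : Type*} [Ring A] [Algebra ℂ A] (n m r : ℕ)
    (X : Matrix (Fin n) (Fin n) A) (Y H : Matrix (Fin n) (Fin m) A)
    (hXanti : ∀ i j, X i j = - X j i)
    (hXcomm : ∀ i j k l, Commute (X i j) (X k l))
    (hXY : ∀ i j k l, X i j * Y k l - Y k l * X i j
        = -((if i = k then H j l else 0) - (if j = k then H i l else 0)))
    (hXH : ∀ i j k l, Commute (X i j) (H k l)) :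
    Smat A n r * chain (fun k : Fin r => X * Y + (r - 1 - (k : ℕ)) • H)
      = Smat A n r * (chain (fun _ : Fin r => X) * chain (fun _ : Fin r => Y)) := by
  ext I K
  rw [smul_entry, smul_entry]
  congr 1
  have key : ∀ p : ℕ, p ≤ r → ∀ I : Fin r → Fin n,
      (∑ σ : Equiv.Perm (Fin r), fA X Y H p (I ∘ σ) K)
        = ∑ σ : Equiv.Perm (Fin r), fA X Y H 0 (I ∘ σ) K := by
    intro p
    induction p with
    | zero => intro _ _; rfl
    | succ p ih =>
        intro hpr I
        have hq : p < r := by omega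
        have hstep := step_lemma X Y H hXanti hXcomm hXY hXH ⟨p, hq⟩ I K
        have h2 : (∑ σ : Equiv.Perm (Fin r), fA X Y H (p + 1) (I ∘ σ) K)
            = ∑ σ : Equiv.Perm (Fin r), fA X Y H p (I ∘ σ) K := hstep.symm
        rw [h2]
        exact ih (by omega) I
  calc ∑ σ : Equiv.Perm (Fin r), chain (fun k : Fin r => X * Y + (r - 1 - (k : ℕ)) • H) (I ∘ σ) K
      = ∑ σ : Equiv.Perm (Fin r), fA X Y H r (I ∘ σ) K :=
        Finset.sum_congr rfl fun σ _ => (fA_top X Y H _ K).symm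
    _ = ∑ σ : Equiv.Perm (Fin r), fA X Y H 0 (I ∘ σ) K := key r le_rfl I
    _ = ∑ σ : Equiv.Perm (Fin r), (chain (fun _ : Fin r => X) * chain (fun _ : Fin r => Y)) (I ∘ σ) K :=
        Finset.sum_congr rfl fun σ _ => fA_zero X Y H _ K

end Stmt6
end
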